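/- arXiv:1903.07418 — 6 statements merged into one kernel-verified Lean document; each statement's English description precedes it below -/
import Mathlib

section
/- Let G=(V,E) be a simple graph on n vertices with girth at least 5. Then the sum of the degrees of all vertices of degree at least 2√n is at most 2n. -/
open SimpleGraph Finset

private lemma no_two_common {V : Type*} (G : SimpleGraph V) (hg : 5 ≤ G.girth)
    {u u' x y : V} (huu' : u ≠ u') (hxy : x ≠ y)
    (hux : G.Adj u x) (hu'x : G.Adj u' x) (huy : G.Adj u y) (hu'y : G.Adj u' y) : False := by
  let w : G.Walk u u := .cons hux (.cons hu'x.symm (.cons hu'y (.cons huy.symm .nil)))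
  have hc : w.IsCycle := by
    simp [w, Walk.isCycle_def, Walk.isTrail_def, hux.ne, huy.ne, hu'x.ne, hu'y.ne, huu', hxy,
      huu'.symm, hxy.symm, hux.ne', huy.ne', hu'x.ne', hu'y.ne', Sym2.eq_iff]
  have h1 : G.egirth ≤ 4 := by
    have := le_egirth.mp (le_refl G.egirth) u w hc
    simpa [w] using this
  have h2 : G.girth ≤ 4 := by
    have := ENat.toNat_le_toNat h1 (by simp)
    simpa [girth] using this
  omega

theorem stmt0 {V : Type*} [Fintype V] [DecidableEq V] (G : SimpleGraph V)
    [DecidableRel G.Adj] (hg : 5 ≤ G.girth) :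
    ∑ v ∈ Finset.univ.filter
        (fun v => 2 * Real.sqrt (Fintype.card V) ≤ (G.degree v : ℝ)),
      (G.degree v : ℝ) ≤ 2 * (Fintype.card V : ℝ) := by
  classical
  set S : Finset V := Finset.univ.filter
      (fun v => 2 * Real.sqrt (Fintype.card V) ≤ (G.degree v : ℝ)) with hSdef
  set s : V → ℕ := fun x => ((G.neighborFinset x) ∩ S).card with hsdef
  -- counting distinct pairs in S with a common neighbor
  have key : ∑ x : V, ((G.neighborFinset x ∩ S).offDiag.card) ≤ S.offDiag.card := by
    have hdisj : ∀ x ∈ (Finset.univ : Finset V), ∀ y ∈ (Finset.univ : Finset V), x ≠ y →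
        Disjoint (({x} : Finset V) ×ˢ ((G.neighborFinset x ∩ S).offDiag))
          (({y} : Finset V) ×ˢ ((G.neighborFinset y ∩ S).offDiag)) := by
      intro x _ y _ hxy
      rw [Finset.disjoint_left]
      rintro ⟨a, b⟩ ha hb
      simp only [Finset.mem_product, Finset.mem_singleton] at ha hb
      exact hxy (ha.1 ▸ hb.1.symm ▸ rfl)
    have hcard : ∀ x : V, (({x} : Finset V) ×ˢ ((G.neighborFinset x ∩ S).offDiag)).card
        = (G.neighborFinset x ∩ S).offDiag.card := by
      intro x; rw [Finset.card_product, Finset.card_singleton, one_mul]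
    calc ∑ x : V, ((G.neighborFinset x ∩ S).offDiag.card)
        = ((Finset.univ : Finset V).biUnion
            (fun x => ({x} : Finset V) ×ˢ ((G.neighborFinset x ∩ S).offDiag))).card := by
          rw [Finset.card_biUnion hdisj]; exact Finset.sum_congr rfl (fun x _ => (hcard x).symm)
      _ ≤ S.offDiag.card := by
          apply Finset.card_le_card_of_injOn (fun p => p.2)
          · rintro ⟨x, u, u'⟩ hp
            simp only [Finset.mem_coe, Finset.mem_biUnion, Finset.mem_product, Finset.mem_singleton,
              Finset.mem_offDiag, Finset.mem_inter, mem_neighborFinset] at hp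
            refine Finset.mem_offDiag.mpr ⟨by tauto, by tauto, by tauto⟩
          · rintro ⟨x, u, u'⟩ hp ⟨x', w, w'⟩ hq heq
            have heq' : (u, u') = (w, w') := heq
            obtain ⟨rfl, rfl⟩ := Prod.mk.inj heq'
            simp only [Finset.mem_coe, Finset.mem_biUnion, Finset.mem_product,
              Finset.mem_singleton, Finset.mem_offDiag, Finset.mem_inter,
              mem_neighborFinset] at hp hq
            obtain ⟨a, ha, hA⟩ := hp
            obtain ⟨b, hb, hB⟩ := hq
            have hax : a = x := by tauto
            have hbx : b = x' := by tauto
            subst hax; subst hbx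
            have hxx : a = b := by
              by_contra hxx
              have huu' : u ≠ u' := by tauto
              have h1 : G.Adj a u := by tauto
              have h2 : G.Adj a u' := by tauto
              have h3 : G.Adj b u := by tauto
              have h4 : G.Adj b u' := by tauto
              exact no_two_common G hg huu' hxx h1.symm h2.symm h3.symm h4.symm
            simp [hxx]
  -- degree sum = sum of s
  have h2 : ∑ u ∈ S, G.degree u = ∑ x : V, s x := by
    have hdeg : ∀ u : V, G.degree u = ∑ x : V, if G.Adj u x then 1 else 0 := by
      intro u
      rw [← G.card_neighborFinset_eq_degree]
      have : G.neighborFinset u = Finset.univ.filter (G.Adj u) := by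
        ext x; simp [mem_neighborFinset]
      rw [this, Finset.card_filter]
    calc ∑ u ∈ S, G.degree u = ∑ u ∈ S, ∑ x : V, if G.Adj u x then 1 else 0 :=
          Finset.sum_congr rfl (fun u _ => hdeg u)
      _ = ∑ x : V, ∑ u ∈ S, if G.Adj u x then 1 else 0 := Finset.sum_comm
      _ = ∑ x : V, s x := by
          refine Finset.sum_congr rfl (fun x _ => ?_)
          rw [← Finset.card_filter]
          simp only [hsdef]
          congr 1
          ext u
          simp only [Finset.mem_filter, Finset.mem_inter, mem_neighborFinset]
          rw [adj_comm]
          tauto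
  -- real arithmetic
  set N : ℝ := (Fintype.card V : ℝ) with hN
  set c : ℝ := (S.card : ℝ) with hc
  set D : ℝ := ∑ v ∈ S, (G.degree v : ℝ) with hD
  have hD0 : 0 ≤ D := Finset.sum_nonneg fun v _ => by positivity
  have hN0 : 0 ≤ N := by positivity
  have hc0 : 0 ≤ c := by positivity
  have hr0 : 0 ≤ Real.sqrt N := Real.sqrt_nonneg _
  have hr2 : Real.sqrt N ^ 2 = N := Real.sq_sqrt hN0
  have hDs : D = ∑ x : V, (s x : ℝ) := by
    rw [hD]
    rw [show (∑ v ∈ S, (G.degree v : ℝ)) = ((∑ v ∈ S, G.degree v : ℕ) : ℝ) by push_cast; rfl]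
    rw [h2]; push_cast; rfl
  -- lower bound on D
  have hcr : c * (2 * Real.sqrt N) ≤ D := by
    have := Finset.card_nsmul_le_sum S (fun v => (G.degree v : ℝ)) (2 * Real.sqrt N)
      (fun u hu => (Finset.mem_filter.mp hu).2)
    simpa [nsmul_eq_mul] using this
  -- Cauchy-Schwarz
  have hcs : D ^ 2 ≤ N * ∑ x : V, (s x : ℝ) ^ 2 := by
    have := sq_sum_le_card_mul_sum_sq (s := (Finset.univ : Finset V))
      (f := fun x => (s x : ℝ))
    rw [← hDs] at this
    simpa [Finset.card_univ] using this
  -- bound on sum of squares (nat level)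
  have hnat : ∑ x : V, s x * s x ≤ S.card * S.card + ∑ x : V, s x := by
    have hle : ∀ m : ℕ, m * m ≤ (m * m - m) + m := by
      intro m
      rcases Nat.eq_zero_or_pos m with h | h
      · simp [h]
      · rw [Nat.sub_add_cancel (Nat.le_mul_of_pos_left m h)]
    calc ∑ x : V, s x * s x ≤ ∑ x : V, ((s x * s x - s x) + s x) :=
          Finset.sum_le_sum fun x _ => hle (s x)
      _ = (∑ x : V, (s x * s x - s x)) + ∑ x : V, s x := Finset.sum_add_distrib
      _ ≤ S.offDiag.card + ∑ x : V, s x := by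
          gcongr
          calc (∑ x : V, (s x * s x - s x))
              = ∑ x : V, (G.neighborFinset x ∩ S).offDiag.card := by
                refine Finset.sum_congr rfl fun x _ => ?_
                rw [Finset.offDiag_card]
            _ ≤ S.offDiag.card := key
      _ ≤ S.card * S.card + ∑ x : V, s x := by
          rw [Finset.offDiag_card]; omega
  have hsq : ∑ x : V, (s x : ℝ) ^ 2 ≤ c * c + D := by
    rw [hDs, hc]
    calc ∑ x : V, (s x : ℝ) ^ 2 = ∑ x : V, (s x : ℝ) * (s x : ℝ) :=
          Finset.sum_congr rfl fun x _ => pow_two _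
      _ ≤ (S.card : ℝ) * (S.card : ℝ) + ∑ x : V, (s x : ℝ) := by exact_mod_cast hnat
  -- finish
  have h4 : 4 * N * c ^ 2 ≤ D ^ 2 := by nlinarith [mul_self_le_mul_self (by positivity : (0:ℝ) ≤ c * (2 * Real.sqrt N)) hcr]
  have h5 : D ^ 2 ≤ N * (c * c + D) := le_trans hcs (by nlinarith [hsq, hN0])
  nlinarith [h4, h5, hD0, hN0, sq_nonneg D, mul_nonneg hN0 hD0, sq_nonneg (D - 2 * N)]
end

section
/- Let G=(V,E) be a simple graph with girth at least 2k+1, where k ≥ 2. Then for all v ∈ V, Σ_{w ∈ N_1(v)} d_{k-1}(w) ≤ d_k(v) + d_1(v)·d_{k-2}(v). -/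
open SimpleGraph Finset

/-- Two distinct paths between the same endpoints yield a cycle of length at most the
sum of the lengths of the two paths. -/
lemma two_paths_cycle {V : Type*} [DecidableEq V] {G : SimpleGraph V} :
    ∀ (n : ℕ) {u v : V} (p q : G.Walk u v), p.IsPath → q.IsPath → p ≠ q →
      p.length + q.length ≤ n →
      ∃ (w : V) (c : G.Walk w w), c.IsCycle ∧ c.length ≤ n := by
  intro n
  induction n using Nat.strong_induction_on with
  | _ n ih =>
    intro u v p q hp hq hne hlen
    cases p with
    | nil =>
      exact absurd (SimpleGraph.Walk.isPath_iff_eq_nil.mp hq).symm hne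
    | cons h p' =>
      rename_i a
      cases q with
      | nil =>
        -- then `cons h p' : G.Walk u u` is a path, impossible
        rw [SimpleGraph.Walk.isPath_iff_eq_nil] at hp
        exact absurd hp (by simp)
      | cons h2 q' =>
        rename_i b
        rw [SimpleGraph.Walk.cons_isPath_iff] at hp hq
        by_cases hab : a = b
        · subst hab
          have hne' : p' ≠ q' := by rintro rfl; exact hne rfl
          simp only [SimpleGraph.Walk.length_cons] at hlen
          obtain ⟨w, c, hc, hcl⟩ :=
            ih (p'.length + q'.length) (by omega) p' q' hp.1 hq.1 hne' le_rfl
          exact ⟨w, c, hc, by omega⟩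
        · -- build a cycle through u, a, b
          have hup' : u ∉ p'.support := hp.2
          have huq' : u ∉ q'.support := hq.2
          let P : G.Walk a b := (p'.append q'.reverse).bypass
          have hPpath : P.IsPath := SimpleGraph.Walk.bypass_isPath _
          have hPlen : P.length ≤ p'.length + q'.length := by
            calc P.length ≤ (p'.append q'.reverse).length :=
                  SimpleGraph.Walk.length_bypass_le _
              _ = p'.length + q'.length := by
                  rw [SimpleGraph.Walk.length_append, SimpleGraph.Walk.length_reverse]
          have huP : u ∉ P.support := by
            intro hu
            have := SimpleGraph.Walk.support_bypass_subset _ hu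
            rw [SimpleGraph.Walk.mem_support_append_iff] at this
            rcases this with h' | h'
            · exact hup' h'
            · exact huq' (by rwa [SimpleGraph.Walk.support_reverse, List.mem_reverse] at h')
          refine ⟨u, SimpleGraph.Walk.cons h (P.concat h2.symm), ?_, ?_⟩
          · rw [SimpleGraph.Walk.cons_isCycle_iff]
            constructor
            · rw [← SimpleGraph.Walk.isPath_reverse_iff, SimpleGraph.Walk.reverse_concat]
              exact SimpleGraph.Walk.IsPath.cons
                ((SimpleGraph.Walk.isPath_reverse_iff _).mpr hPpath)
                (by rwa [SimpleGraph.Walk.support_reverse, List.mem_reverse])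
            · intro hmem
              simp only [SimpleGraph.Walk.edges_concat, List.concat_eq_append, List.mem_append] at hmem
              rcases hmem with hmem | hmem
              · exact huP (SimpleGraph.Walk.fst_mem_support_of_mem_edges _ hmem)
              · simp only [List.mem_singleton, Sym2.eq_iff] at hmem
                rcases hmem with ⟨rfl, rfl⟩ | ⟨-, rfl⟩
                · exact G.irrefl h2
                · exact hab rfl
          · simp only [SimpleGraph.Walk.length_cons, SimpleGraph.Walk.length_concat]
            simp only [SimpleGraph.Walk.length_cons] at hlen
            omega

/-- If a vertex `v` distinct from `w` lies on a walk `q : w → x`, then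
`dist v x + 1 ≤ q.length`. -/
lemma dist_lt_of_mem_support {V : Type*} [DecidableEq V] {G : SimpleGraph V} {w x v : V}
    (q : G.Walk w x) (hv : v ∈ q.support) (hvw : v ≠ w) :
    G.dist v x + 1 ≤ q.length := by
  have hsplit := q.take_spec hv
  have hlen : (q.takeUntil v hv).length + (q.dropUntil v hv).length = q.length := by
    rw [← SimpleGraph.Walk.length_append, hsplit]
  have h1 : 1 ≤ (q.takeUntil v hv).length := by
    by_contra h
    push_neg at h
    interval_cases h' : (q.takeUntil v hv).length
    exact hvw (SimpleGraph.Walk.eq_of_length_eq_zero h').symm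
  have h2 : G.dist v x ≤ (q.dropUntil v hv).length := SimpleGraph.dist_le _
  omega

/-- `distCount G v i` is the number of vertices at hop-distance exactly `i` from `v`. -/
noncomputable def distCount {V : Type*} (G : SimpleGraph V) (v : V) (i : ℕ) : ℕ :=
  Set.ncard {w : V | G.Reachable v w ∧ G.dist v w = i}

theorem stmt4 {V : Type*} [Fintype V] [DecidableEq V] (G : SimpleGraph V)
    [DecidableRel G.Adj] (k : ℕ) (hk : 2 ≤ k) (hg : (2 * k + 1 : ℕ∞) ≤ G.girth)
    (v : V) :
    ∑ w ∈ G.neighborFinset v, distCount G w (k - 1) ≤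
      distCount G v k + G.degree v * distCount G v (k - 2) := by
  classical
  -- every cycle has length at least 2k+1
  have hcyc : ∀ (w : V) (c : G.Walk w w), c.IsCycle → 2 * k + 1 ≤ c.length := by
    intro w c hc
    have hnA : ¬ G.IsAcyclic := fun hA => hA c hc
    have htop : G.egirth ≠ ⊤ := fun h => hnA (SimpleGraph.egirth_eq_top.mp h)
    have : (G.girth : ℕ∞) = G.egirth := ENat.coe_toNat htop
    have hg' : (2 * k + 1 : ℕ∞) ≤ G.egirth := this ▸ hg
    have := SimpleGraph.le_egirth.mp hg' w c hc
    exact_mod_cast this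
  -- no two distinct short paths between the same endpoints
  have hpaths : ∀ {u x : V} (p q : G.Walk u x), p.IsPath → q.IsPath → p ≠ q →
      p.length + q.length ≤ 2 * k → False := by
    intro u x p q hp hq hne hlen
    obtain ⟨w, c, hc, hclen⟩ := two_paths_cycle (2 * k) p q hp hq hne hlen
    have := hcyc w c hc
    omega
  -- counting with finsets
  set F : V → ℕ → Finset V := fun w i =>
    univ.filter (fun x => G.Reachable w x ∧ G.dist w x = i) with hF
  have hcount : ∀ w i, distCount G w i = (F w i).card := by
    intro w i
    rw [distCount, ← Set.ncard_coe_finset]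
    congr 1
    ext x
    simp [hF]
  have hmemF : ∀ w i x, x ∈ F w i ↔ G.Reachable w x ∧ G.dist w x = i := by
    intro w i x; simp [hF]
  -- main pointwise claim: for w a neighbor of v and x at distance k-1 from w,
  -- dist v x = k-2 or dist v x = k, and x is reachable from v
  have hclaim : ∀ w, G.Adj v w → ∀ x, x ∈ F w (k - 1) →
      G.Reachable v x ∧ (G.dist v x = k - 2 ∨ G.dist v x = k) := by
    intro w hadj x hx
    rw [hmemF] at hx
    obtain ⟨hreach, hdist⟩ := hx
    have hreachv : G.Reachable v x := (hadj.reachable).trans hreach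
    obtain ⟨q, hqp, hqlen⟩ := hreach.exists_path_of_dist
    obtain ⟨p, hpp, hplen⟩ := hreachv.exists_path_of_dist
    -- dist v x ≤ k
    have hub : G.dist v x ≤ k := by
      have := SimpleGraph.dist_le (SimpleGraph.Walk.cons hadj q)
      rw [SimpleGraph.Walk.length_cons, hqlen, hdist] at this
      omega
    -- dist w x ≤ dist v x + 1, i.e. k - 1 ≤ dist v x + 1
    have hlb : k - 1 ≤ G.dist v x + 1 := by
      have := SimpleGraph.dist_le (SimpleGraph.Walk.cons hadj.symm p)
      rw [SimpleGraph.Walk.length_cons, hplen] at this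
      omega
    -- dist v x ≠ k - 1
    have hne : G.dist v x ≠ k - 1 := by
      intro hd
      have hvq : v ∉ q.support := by
        intro hv
        have := dist_lt_of_mem_support q hv (G.ne_of_adj hadj)
        rw [hqlen, hdist, hd] at this
        omega
      have hconsp : (SimpleGraph.Walk.cons hadj q).IsPath :=
        SimpleGraph.Walk.IsPath.cons hqp hvq
      have hnep : p ≠ SimpleGraph.Walk.cons hadj q := by
        intro he
        have := congrArg SimpleGraph.Walk.length he
        rw [SimpleGraph.Walk.length_cons, hplen, hqlen, hdist, hd] at this
        omega
      exact hpaths p (SimpleGraph.Walk.cons hadj q) hpp hconsp hnep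
        (by rw [SimpleGraph.Walk.length_cons, hplen, hqlen, hdist, hd]; omega)
    exact ⟨hreachv, by omega⟩
  -- pointwise bound on each summand
  have hsummand : ∀ w ∈ G.neighborFinset v,
      (F w (k - 1)).card ≤ (F w (k - 1) ∩ F v k).card + (F v (k - 2)).card := by
    intro w hw
    rw [G.mem_neighborFinset] at hw
    have hsub : F w (k - 1) ⊆ (F w (k - 1) ∩ F v k) ∪ (F v (k - 2)) := by
      intro x hx
      obtain ⟨hr, hd⟩ := hclaim w hw x hx
      rcases hd with hd | hd
      · exact Finset.mem_union_right _ ((hmemF v (k - 2) x).mpr ⟨hr, hd⟩)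
      · exact Finset.mem_union_left _
          (Finset.mem_inter.mpr ⟨hx, (hmemF v k x).mpr ⟨hr, hd⟩⟩)
    calc (F w (k - 1)).card ≤ ((F w (k - 1) ∩ F v k) ∪ (F v (k - 2))).card :=
          Finset.card_le_card hsub
      _ ≤ (F w (k - 1) ∩ F v k).card + (F v (k - 2)).card := Finset.card_union_le _ _
  -- the sets F w (k-1) ∩ F v k for w ∈ N(v) are pairwise disjoint
  have hdisj : ∀ w₁ ∈ G.neighborFinset v, ∀ w₂ ∈ G.neighborFinset v, w₁ ≠ w₂ →
      Disjoint (F w₁ (k - 1) ∩ F v k) (F w₂ (k - 1) ∩ F v k) := by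
    intro w₁ hw₁ w₂ hw₂ hne12
    rw [G.mem_neighborFinset] at hw₁ hw₂
    rw [Finset.disjoint_left]
    intro x hx1 hx2
    rw [Finset.mem_inter, hmemF, hmemF] at hx1 hx2
    obtain ⟨⟨hr1, hd1⟩, -, hdvk⟩ := hx1
    obtain ⟨⟨hr2, hd2⟩, -, -⟩ := hx2
    obtain ⟨q₁, hq₁p, hq₁len⟩ := hr1.exists_path_of_dist
    obtain ⟨q₂, hq₂p, hq₂len⟩ := hr2.exists_path_of_dist
    have hvq : ∀ {w : V} (hadj : G.Adj v w) (q : G.Walk w x), q.IsPath →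
        q.length = k - 1 → v ∉ q.support := by
      intro w hadj q hqp hql hv
      have := dist_lt_of_mem_support q hv (G.ne_of_adj hadj)
      rw [hql, hdvk] at this
      omega
    have h1 : (SimpleGraph.Walk.cons hw₁ q₁).IsPath :=
      SimpleGraph.Walk.IsPath.cons hq₁p (hvq hw₁ q₁ hq₁p (by rw [hq₁len, hd1]))
    have h2 : (SimpleGraph.Walk.cons hw₂ q₂).IsPath :=
      SimpleGraph.Walk.IsPath.cons hq₂p (hvq hw₂ q₂ hq₂p (by rw [hq₂len, hd2]))
    have hnepq : SimpleGraph.Walk.cons hw₁ q₁ ≠ SimpleGraph.Walk.cons hw₂ q₂ := by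
      intro he
      have := congrArg SimpleGraph.Walk.support he
      rw [SimpleGraph.Walk.support_cons, SimpleGraph.Walk.support_cons,
        q₁.support_eq_cons, q₂.support_eq_cons] at this
      simp only [List.cons.injEq] at this
      exact hne12 this.2.1
    exact hpaths _ _ h1 h2 hnepq
      (by rw [SimpleGraph.Walk.length_cons, SimpleGraph.Walk.length_cons,
        hq₁len, hq₂len, hd1, hd2]; omega)
  -- put everything together
  calc ∑ w ∈ G.neighborFinset v, distCount G w (k - 1)
      = ∑ w ∈ G.neighborFinset v, (F w (k - 1)).card := by
        refine Finset.sum_congr rfl fun w _ => hcount w (k - 1)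
    _ ≤ ∑ w ∈ G.neighborFinset v,
        ((F w (k - 1) ∩ F v k).card + (F v (k - 2)).card) :=
        Finset.sum_le_sum hsummand
    _ = (∑ w ∈ G.neighborFinset v, (F w (k - 1) ∩ F v k).card)
        + G.degree v * (F v (k - 2)).card := by
        rw [Finset.sum_add_distrib, Finset.sum_const, smul_eq_mul]
        rfl
    _ ≤ (F v k).card + G.degree v * (F v (k - 2)).card := by
        gcongr
        calc ∑ w ∈ G.neighborFinset v, (F w (k - 1) ∩ F v k).card
            = ((G.neighborFinset v).biUnion fun w => F w (k - 1) ∩ F v k).card :=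
              (Finset.card_biUnion hdisj).symm
          _ ≤ (F v k).card := by
              apply Finset.card_le_card
              intro x hx
              rw [Finset.mem_biUnion] at hx
              obtain ⟨w, -, hx⟩ := hx
              exact (Finset.mem_inter.mp hx).2
    _ = distCount G v k + G.degree v * distCount G v (k - 2) := by
        rw [hcount v k, hcount v (k - 2)]
end

section
/- Let k ≥ 2 and let G=(V,E) be an n-vertex simple graph with girth at least 2k+1 and minimum degree at least 4. Then Σ_{v ∈ V} d_1(v)²·d_{k-2}(v) / (d_k(v) + d_1(v)·d_{k-2}(v)) ≤ 2n. -/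
open SimpleGraph Finset

namespace Stmt7Aux

variable {V : Type*} [DecidableEq V] {G : SimpleGraph V}

/-- If a path from `a` to `b` contains the edge `s(a,b)`, it is the single-edge path. -/
private lemma path_edge_singleton {a b : V} :
    ∀ (q : G.Walk a b), q.IsPath → s(a, b) ∈ q.edges → ∀ (h : G.Adj a b),
      q = SimpleGraph.Walk.cons h SimpleGraph.Walk.nil := by
  intro q hq he h
  cases q with
  | nil => simp at he
  | @cons _ d _ h2 q2 =>
    rw [SimpleGraph.Walk.edges_cons, List.mem_cons] at he
    rcases he with he | he
    · have hbd : b = d := by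
        rcases Sym2.eq_iff.mp he with ⟨-, h'⟩ | ⟨h1', h2'⟩
        · exact h'
        · exfalso; subst h1'; exact G.loopless.irrefl a h2
      subst hbd
      have hq2 : q2 = SimpleGraph.Walk.nil :=
        SimpleGraph.Walk.isPath_iff_eq_nil.mp hq.of_cons
      subst hq2
      rfl
    · exfalso
      exact ((SimpleGraph.Walk.cons_isPath_iff h2 q2).mp hq).2
        (q2.fst_mem_support_of_mem_edges he)

/-- Two distinct paths with the same endpoints yield a cycle of length at most the sum of
their lengths. -/
private lemma two_paths_cycle (N : ℕ) :
    ∀ {a b : V} (p q : G.Walk a b), p.IsPath → q.IsPath → p ≠ q →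
      p.length + q.length ≤ N →
      ∃ (x : V) (c : G.Walk x x), c.IsCycle ∧ c.length ≤ p.length + q.length := by
  induction N using Nat.strong_induction_on with
  | _ N IH =>
    intro a b p q hp hq hpq hN
    by_cases hab : a = b
    · subst hab
      rw [SimpleGraph.Walk.isPath_iff_eq_nil] at hp hq
      exact absurd (hp.trans hq.symm) hpq
    · by_cases hshare : ∃ x, (x ∈ p.support ∧ x ∈ q.support) ∧ x ≠ a ∧ x ≠ b
      · obtain ⟨x, ⟨hxp, hxq⟩, hxa, hxb⟩ := hshare
        have hsp := p.take_spec hxp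
        have hsq := q.take_spec hxq
        have hlp : (p.takeUntil x hxp).length + (p.dropUntil x hxp).length = p.length := by
          rw [← SimpleGraph.Walk.length_append, hsp]
        have hlq : (q.takeUntil x hxq).length + (q.dropUntil x hxq).length = q.length := by
          rw [← SimpleGraph.Walk.length_append, hsq]
        have hta : (p.takeUntil x hxp).length ≠ 0 := fun h0 =>
          hxa (SimpleGraph.Walk.eq_of_length_eq_zero h0).symm
        have htaq : (q.takeUntil x hxq).length ≠ 0 := fun h0 =>
          hxa (SimpleGraph.Walk.eq_of_length_eq_zero h0).symm
        have htb : (p.dropUntil x hxp).length ≠ 0 := fun h0 =>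
          hxb (SimpleGraph.Walk.eq_of_length_eq_zero h0)
        have htbq : (q.dropUntil x hxq).length ≠ 0 := fun h0 =>
          hxb (SimpleGraph.Walk.eq_of_length_eq_zero h0)
        by_cases h1 : p.takeUntil x hxp = q.takeUntil x hxq
        · have h2 : p.dropUntil x hxp ≠ q.dropUntil x hxq := by
            intro h2
            exact hpq (by rw [← hsp, ← hsq, h1, h2])
          obtain ⟨y, c, hc, hcl⟩ := IH ((p.dropUntil x hxp).length + (q.dropUntil x hxq).length)
            (by omega) _ _ (hp.dropUntil hxp) (hq.dropUntil hxq) h2 le_rfl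
          exact ⟨y, c, hc, by omega⟩
        · obtain ⟨y, c, hc, hcl⟩ := IH ((p.takeUntil x hxp).length + (q.takeUntil x hxq).length)
            (by omega) _ _ (hp.takeUntil hxp) (hq.takeUntil hxq) h1 le_rfl
          exact ⟨y, c, hc, by omega⟩
      · push_neg at hshare
        cases p with
        | nil => exact absurd rfl hab
        | @cons _ c _ h p' =>
          have hp' : p'.IsPath := hp.of_cons
          have hanp : a ∉ p'.support := ((SimpleGraph.Walk.cons_isPath_iff h p').mp hp).2
          have hqr : q.reverse.IsPath := hq.reverse
          have hwp : (p'.append q.reverse).IsPath := by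
            rw [SimpleGraph.Walk.isPath_def, SimpleGraph.Walk.support_append, List.nodup_append]
            refine ⟨hp'.support_nodup, ?_, ?_⟩
            · have h1 := hqr.support_nodup
              rw [q.reverse.support_eq_cons] at h1
              exact h1.of_cons
            · intro y hyp' z hyt hyz
              rw [← hyz] at hyt
              have hyq : y ∈ q.support := by
                have hmem : y ∈ q.reverse.support := List.mem_of_mem_tail hyt
                rwa [SimpleGraph.Walk.support_reverse, List.mem_reverse] at hmem
              have hyP : y ∈ (SimpleGraph.Walk.cons h p').support := by
                rw [SimpleGraph.Walk.support_cons]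
                exact List.mem_cons_of_mem _ hyp'
              have hya : y ≠ a := fun hya => hanp (hya ▸ hyp')
              have hyb : y = b := hshare y ⟨hyP, hyq⟩ hya
              have h1 := hqr.support_nodup
              rw [q.reverse.support_eq_cons, List.nodup_cons] at h1
              exact h1.1 (hyb ▸ hyt)
          have hedge : s(a, c) ∉ (p'.append q.reverse).edges := by
            rw [SimpleGraph.Walk.edges_append, List.mem_append]
            rintro (he | he)
            · exact hanp (p'.fst_mem_support_of_mem_edges he)
            · have heq : s(a, c) ∈ q.edges := by
                rwa [SimpleGraph.Walk.edges_reverse, List.mem_reverse] at he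
              have hcq : c ∈ q.support := q.snd_mem_support_of_mem_edges heq
              have hcp : c ∈ (SimpleGraph.Walk.cons h p').support := by
                rw [SimpleGraph.Walk.support_cons]
                exact List.mem_cons_of_mem _ p'.start_mem_support
              have hca : c ≠ a := fun hh => G.loopless.irrefl a (hh ▸ h)
              have hcb : c = b := hshare c ⟨hcp, hcq⟩ hca
              subst hcb
              have hq1 := path_edge_singleton q hq heq h
              have hp1 : p' = SimpleGraph.Walk.nil :=
                SimpleGraph.Walk.isPath_iff_eq_nil.mp hp'
              exact hpq (by rw [hp1, hq1])
          refine ⟨a, SimpleGraph.Walk.cons h (p'.append q.reverse),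
            (SimpleGraph.Walk.cons_isCycle_iff _ h).mpr ⟨hwp, hedge⟩, ?_⟩
          simp only [SimpleGraph.Walk.length_cons, SimpleGraph.Walk.length_append,
            SimpleGraph.Walk.length_reverse]
          omega

private lemma cycle_ge {k : ℕ} (hg : (2 * k + 1 : ℕ∞) ≤ G.girth) {x : V} {c : G.Walk x x}
    (hc : c.IsCycle) : 2 * k + 1 ≤ c.length := by
  have h1 : G.egirth ≤ (c.length : ℕ∞) := le_egirth.mp le_rfl x c hc
  have h2 : G.egirth ≠ ⊤ := by
    intro hh
    rw [hh, top_le_iff] at h1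
    exact (WithTop.coe_ne_top (a := c.length)) h1
  have h3 : (G.girth : ℕ∞) = G.egirth := ENat.coe_toNat h2
  have h4 : (2 * k + 1 : ℕ∞) ≤ (c.length : ℕ∞) := le_trans (h3 ▸ hg) h1
  exact_mod_cast h4

private lemma no_two_paths {k : ℕ} (hg : (2 * k + 1 : ℕ∞) ≤ G.girth) {a b : V}
    {p q : G.Walk a b} (hp : p.IsPath) (hq : q.IsPath) (hne : p ≠ q)
    (hlen : p.length + q.length ≤ 2 * k) : False := by
  obtain ⟨x, c, hc, hcl⟩ := two_paths_cycle (p.length + q.length) p q hp hq hne le_rfl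
  have := cycle_ge hg hc
  omega

private lemma dist_succ {s t x : V} (h : G.Adj s t) (hr : G.Reachable t x) :
    G.dist s x ≤ G.dist t x + 1 := by
  obtain ⟨P, _, hPl⟩ := hr.exists_path_of_dist
  have h2 := SimpleGraph.dist_le (SimpleGraph.Walk.cons h P)
  rwa [SimpleGraph.Walk.length_cons, hPl] at h2

/-- Adjacent vertices cannot be at equal, small distance from a common target. -/
private lemma near {k : ℕ} (hg : (2 * k + 1 : ℕ∞) ≤ G.girth) {s t x : V} (h : G.Adj s t)
    (hrs : G.Reachable s x) (hrt : G.Reachable t x) (heq : G.dist s x = G.dist t x)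
    (hlen : 2 * G.dist s x + 1 ≤ 2 * k) : False := by
  obtain ⟨P, hP, hPl⟩ := hrt.exists_path_of_dist
  have hsP : s ∉ P.support := by
    intro hs
    have h1 := SimpleGraph.dist_le (P.dropUntil s hs)
    have h2 : (P.takeUntil s hs).length + (P.dropUntil s hs).length = P.length := by
      rw [← SimpleGraph.Walk.length_append, P.take_spec hs]
    have h3 : (P.takeUntil s hs).length ≠ 0 := fun h0 =>
      (G.ne_of_adj h) (SimpleGraph.Walk.eq_of_length_eq_zero h0).symm
    omega
  obtain ⟨Q, hQ, hQl⟩ := hrs.exists_path_of_dist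
  have hne : Q ≠ SimpleGraph.Walk.cons h P := by
    intro hh
    have hlen2 := congrArg SimpleGraph.Walk.length hh
    rw [SimpleGraph.Walk.length_cons] at hlen2
    omega
  exact no_two_paths hg hQ (hP.cons hsP) hne (by rw [SimpleGraph.Walk.length_cons]; omega)

/-- At most one neighbour of `t` can be at small distance `j` from `x` when
`dist t x ≥ j + 1`. -/
private lemma uniq {k j : ℕ} (hg : (2 * k + 1 : ℕ∞) ≤ G.girth) {t s s' x : V}
    (h : G.Adj t s) (h' : G.Adj t s') (hne : s ≠ s') (hrs : G.Reachable s x)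
    (hrs' : G.Reachable s' x) (hds : G.dist s x = j) (hds' : G.dist s' x = j)
    (hdt : j + 1 ≤ G.dist t x) (hlen : 2 * j + 2 ≤ 2 * k) : False := by
  obtain ⟨P, hP, hPl⟩ := hrs.exists_path_of_dist
  obtain ⟨Q, hQ, hQl⟩ := hrs'.exists_path_of_dist
  have htP : t ∉ P.support := by
    intro ht
    have h1 := SimpleGraph.dist_le (P.dropUntil t ht)
    have h2 := SimpleGraph.Walk.length_dropUntil_le P ht
    omega
  have htQ : t ∉ Q.support := by
    intro ht
    have h1 := SimpleGraph.dist_le (Q.dropUntil t ht)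
    have h2 := SimpleGraph.Walk.length_dropUntil_le Q ht
    omega
  have hPQ : SimpleGraph.Walk.cons h P ≠ SimpleGraph.Walk.cons h' Q := by
    intro hh
    have hgv := congrArg (fun w => SimpleGraph.Walk.getVert w 1) hh
    simp only [SimpleGraph.Walk.getVert_cons _ _ one_ne_zero, Nat.sub_self, SimpleGraph.Walk.getVert_zero] at hgv
    exact hne hgv
  exact no_two_paths hg (hP.cons htP) (hQ.cons htQ) hPQ
    (by simp only [SimpleGraph.Walk.length_cons]; omega)

/-- The per-vertex Cauchy–Schwarz computation, as a pure inequality over the reals. -/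
private lemma arith {ι : Type*} (s : Finset ι) (m D A : ι → ℝ) (a b d : ℝ)
    (hd4 : 4 ≤ d) (hb1 : 1 ≤ b) (ha0 : 0 ≤ a)
    (hm0 : ∀ u ∈ s, 0 ≤ m u) (hA0 : ∀ u ∈ s, 0 ≤ A u) (hD1 : ∀ u ∈ s, 1 ≤ D u)
    (hmb : ∀ u ∈ s, m u ≤ b) (hDam : ∀ u ∈ s, D u ≤ A u + m u)
    (hsa : ∑ u ∈ s, A u ≤ a) (hsm_lb : (d - 1) * b ≤ ∑ u ∈ s, m u)
    (hsm_ub : ∑ u ∈ s, m u ≤ d * b) :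
    d ^ 2 * b / (a + d * b) ≤ 2 * ∑ u ∈ s, m u / D u := by
  have hDpos : ∀ u ∈ s, (0 : ℝ) < D u := fun u hu => lt_of_lt_of_le one_pos (hD1 u hu)
  have hdb : (4 : ℝ) * 1 ≤ d * b := mul_le_mul hd4 hb1 zero_le_one (by linarith)
  have hadb_pos : (0 : ℝ) < a + d * b := by linarith
  have hcauchy : (∑ u ∈ s, m u) ^ 2 ≤ (∑ u ∈ s, m u / D u) * (∑ u ∈ s, m u * D u) := by
    refine Finset.sum_sq_le_sum_mul_sum_of_sq_eq_mul s
      (fun u hu => div_nonneg (hm0 u hu) (hDpos u hu).le)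
      (fun u hu => mul_nonneg (hm0 u hu) (hDpos u hu).le)
      (fun u hu => ?_)
    have h := (hDpos u hu).ne'
    field_simp
  have hT : (∑ u ∈ s, m u * D u) ≤ b * (a + d * b) := by
    calc (∑ u ∈ s, m u * D u)
        ≤ ∑ u ∈ s, b * (A u + m u) := by
          refine Finset.sum_le_sum fun u hu => ?_
          exact mul_le_mul (hmb u hu) (hDam u hu) (hDpos u hu).le (by linarith)
      _ = b * ((∑ u ∈ s, A u) + ∑ u ∈ s, m u) := by
          rw [← Finset.mul_sum, Finset.sum_add_distrib]
      _ ≤ b * (a + d * b) := by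
          refine mul_le_mul_of_nonneg_left ?_ (by linarith)
          linarith
  have hsm_pos : (0 : ℝ) < ∑ u ∈ s, m u := by
    have h3 : (3 : ℝ) * 1 ≤ (d - 1) * b := mul_le_mul (by linarith) hb1 zero_le_one (by linarith)
    linarith
  have hTpos : (0 : ℝ) < ∑ u ∈ s, m u * D u := by
    refine lt_of_lt_of_le hsm_pos (Finset.sum_le_sum fun u hu => ?_)
    exact le_mul_of_one_le_right (hm0 u hu) (hD1 u hu)
  have hS1 : ((d - 1) * b) ^ 2 / (b * (a + d * b)) ≤ ∑ u ∈ s, m u / D u := by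
    have h1 : ((d - 1) * b) ^ 2 / (b * (a + d * b))
        ≤ (∑ u ∈ s, m u) ^ 2 / (∑ u ∈ s, m u * D u) := by
      refine div_le_div₀ (sq_nonneg _) ?_ hTpos hT
      refine pow_le_pow_left₀ (by nlinarith) hsm_lb 2
    have h2 : (∑ u ∈ s, m u) ^ 2 / (∑ u ∈ s, m u * D u) ≤ ∑ u ∈ s, m u / D u := by
      rw [div_le_iff₀ hTpos]
      exact hcauchy
    linarith
  have hEqS : ((d - 1) * b) ^ 2 / (b * (a + d * b)) = (d - 1) ^ 2 * b / (a + d * b) := by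
    have hbne : b ≠ 0 := by linarith
    field_simp
  have hkey : d ^ 2 * b / (a + d * b) ≤ 2 * ((d - 1) ^ 2 * b / (a + d * b)) := by
    have hdd : (0 : ℝ) ≤ (d - 4) * d * b :=
      mul_nonneg (mul_nonneg (by linarith) (by linarith)) (by linarith)
    calc d ^ 2 * b / (a + d * b) ≤ 2 * ((d - 1) ^ 2 * b) / (a + d * b) :=
          (div_le_div_iff_of_pos_right hadb_pos).mpr (by nlinarith)
      _ = 2 * ((d - 1) ^ 2 * b / (a + d * b)) := by rw [mul_div_assoc]
  rw [hEqS] at hS1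
  linarith

end Stmt7Aux

theorem stmt7 {V : Type*} [Fintype V] [DecidableEq V] (G : SimpleGraph V)
    [DecidableRel G.Adj] (k : ℕ) (hk : 2 ≤ k) (hg : (2 * k + 1 : ℕ∞) ≤ G.girth)
    (hmin : ∀ v : V, 4 ≤ G.degree v) :
    ∑ v : V, (G.degree v : ℝ) ^ 2 * (distCount G v (k - 2) : ℝ) /
        ((distCount G v k : ℝ) + (G.degree v : ℝ) * (distCount G v (k - 2) : ℝ)) ≤
      2 * (Fintype.card V : ℝ) := by
  classical
  -- level sets
  set L : V → ℕ → Finset V :=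
    fun v i => Finset.univ.filter (fun x => G.Reachable v x ∧ G.dist v x = i) with hLdef
  have hmemL : ∀ v x i, x ∈ L v i ↔ G.Reachable v x ∧ G.dist v x = i := by
    intro v x i; simp [hLdef]
  have hdc : ∀ v i, (distCount G v i : ℕ) = (L v i).card := by
    intro v i
    have h1 : {w : V | G.Reachable v w ∧ G.dist v w = i} = ↑(L v i) := by
      ext w; simp [hmemL]
    rw [distCount, h1, Set.ncard_coe_finset]
  -- the M and A sets
  set M : V → V → Finset V :=
    fun u v => (L v (k - 2)).filter (fun x => G.dist u x = k - 1) with hMdef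
  set A : V → V → Finset V :=
    fun u v => (L v k).filter (fun x => G.dist u x = k - 1) with hAdef
  have hmemM : ∀ u w x, x ∈ M u w ↔
      (G.Reachable w x ∧ G.dist w x = k - 2) ∧ G.dist u x = k - 1 := by
    intro u w x
    simp only [hMdef]
    rw [Finset.mem_filter, hmemL]
  -- nonemptiness of small levels
  have hnonempty : ∀ (v : V) (j : ℕ), j ≤ k - 1 → (L v j).Nonempty := by
    intro v j
    induction j with
    | zero =>
      intro _
      exact ⟨v, (hmemL v v 0).mpr ⟨SimpleGraph.Reachable.refl v, SimpleGraph.dist_self⟩⟩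
    | succ j ih =>
      intro hj
      obtain ⟨x, hx⟩ := ih (by omega)
      rw [hmemL] at hx
      obtain ⟨hrx, hdx⟩ := hx
      by_contra hemp
      rw [Finset.not_nonempty_iff_eq_empty] at hemp
      have hkey : ∀ y ∈ G.neighborFinset x, G.dist v y + 1 = j := by
        intro y hy
        rw [SimpleGraph.mem_neighborFinset] at hy
        have hry : G.Reachable v y := hrx.trans hy.reachable
        have h1 : G.dist y v ≤ G.dist x v + 1 := Stmt7Aux.dist_succ hy.symm hrx.symm
        have h2 : G.dist x v ≤ G.dist y v + 1 := Stmt7Aux.dist_succ hy hry.symm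
        rw [SimpleGraph.dist_comm (u := y) (v := v), SimpleGraph.dist_comm (u := x) (v := v)] at h1 h2
        have hne1 : G.dist v y ≠ j + 1 := by
          intro hh
          have : y ∈ L v (j + 1) := (hmemL v y (j + 1)).mpr ⟨hry, hh⟩
          rw [hemp] at this
          exact absurd this (Finset.notMem_empty y)
        have hne2 : G.dist v y ≠ j := by
          intro hh
          refine Stmt7Aux.near hg hy.symm hry.symm hrx.symm ?_ ?_
          · rw [SimpleGraph.dist_comm (u := y) (v := v), SimpleGraph.dist_comm (u := x) (v := v), hh, hdx]
          · rw [SimpleGraph.dist_comm (u := y) (v := v), hh]; omega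
        omega
      have hcard : 4 ≤ (G.neighborFinset x).card := by
        rw [SimpleGraph.card_neighborFinset_eq_degree]; exact hmin x
      obtain ⟨y, hy, y', hy', hyy'⟩ := Finset.one_lt_card (s := G.neighborFinset x) |>.mp (by omega)
      have hjy := hkey y hy
      have hjy' := hkey y' hy'
      rw [SimpleGraph.mem_neighborFinset] at hy hy'
      have hry : G.Reachable y v := (hrx.trans hy.reachable).symm
      have hry' : G.Reachable y' v := (hrx.trans hy'.reachable).symm
      refine Stmt7Aux.uniq (j := j - 1) hg hy hy' hyy' hry hry' ?_ ?_ ?_ ?_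
      · rw [SimpleGraph.dist_comm]; omega
      · rw [SimpleGraph.dist_comm]; omega
      · rw [SimpleGraph.dist_comm]; omega
      · omega
  -- partition of the (k-1)-level of a neighbour
  have hpart : ∀ v u, G.Adj v u → (L u (k - 1)).card ≤ (A u v).card + (M u v).card := by
    intro v u hadj
    have hsub : L u (k - 1) ⊆ A u v ∪ M u v := by
      intro x hx
      rw [hmemL] at hx
      obtain ⟨hru, hdu⟩ := hx
      have hrv : G.Reachable v x := hadj.reachable.trans hru
      have h1 : G.dist v x ≤ G.dist u x + 1 := Stmt7Aux.dist_succ hadj hru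
      have h2 : G.dist u x ≤ G.dist v x + 1 := Stmt7Aux.dist_succ hadj.symm hrv
      have h3 : G.dist v x ≠ k - 1 := by
        intro hh
        exact Stmt7Aux.near hg hadj hrv hru (by omega) (by omega)
      have h4 : G.dist v x = k ∨ G.dist v x = k - 2 := by omega
      rw [Finset.mem_union, hAdef, hMdef]
      rcases h4 with h4 | h4
      · exact Or.inl (Finset.mem_filter.mpr ⟨(hmemL v x k).mpr ⟨hrv, h4⟩, hdu⟩)
      · exact Or.inr (Finset.mem_filter.mpr ⟨(hmemL v x (k - 2)).mpr ⟨hrv, h4⟩, hdu⟩)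
    calc (L u (k - 1)).card ≤ (A u v ∪ M u v).card := Finset.card_le_card hsub
      _ ≤ (A u v).card + (M u v).card := Finset.card_union_le _ _
  -- M is a subset of the (k-2)-level
  have hMub : ∀ u v, (M u v).card ≤ (L v (k - 2)).card := by
    intro u v
    exact Finset.card_le_card (by rw [hMdef]; exact Finset.filter_subset _ _)
  -- sum of A-cards is at most the k-level count
  have hsumA : ∀ v : V, (∑ u ∈ G.neighborFinset v, (A u v).card) ≤ (L v k).card := by
    intro v
    have hrw : ∀ u, (A u v).card = ∑ x ∈ L v k, if G.dist u x = k - 1 then 1 else 0 := by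
      intro u; rw [hAdef]; exact Finset.card_filter _ _
    calc (∑ u ∈ G.neighborFinset v, (A u v).card)
        = ∑ u ∈ G.neighborFinset v, ∑ x ∈ L v k, if G.dist u x = k - 1 then 1 else 0 := by
          exact Finset.sum_congr rfl fun u _ => hrw u
      _ = ∑ x ∈ L v k, ∑ u ∈ G.neighborFinset v, if G.dist u x = k - 1 then 1 else 0 :=
          Finset.sum_comm
      _ ≤ ∑ _x ∈ L v k, 1 := by
          refine Finset.sum_le_sum fun x hx => ?_
          rw [← Finset.card_filter]
          rw [hmemL] at hx
          refine Finset.card_le_one.mpr fun u hu u' hu' => ?_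
          rw [Finset.mem_filter, SimpleGraph.mem_neighborFinset] at hu hu'
          by_contra hne
          refine Stmt7Aux.uniq (j := k - 1) hg hu.1 hu'.1 hne
            (hu.1.symm.reachable.trans hx.1) (hu'.1.symm.reachable.trans hx.1)
            hu.2 hu'.2 (by omega) (by omega)
      _ = (L v k).card := by simp
  -- sum of M-cards is at least (degree - 1) * (k-2)-level count
  have hsumM_lb : ∀ v : V,
      (G.degree v - 1) * (L v (k - 2)).card ≤ ∑ u ∈ G.neighborFinset v, (M u v).card := by
    intro v
    have hrw : ∀ u, (M u v).card = ∑ x ∈ L v (k - 2), if G.dist u x = k - 1 then 1 else 0 := by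
      intro u; rw [hMdef]; exact Finset.card_filter _ _
    have hswap : (∑ u ∈ G.neighborFinset v, (M u v).card)
        = ∑ x ∈ L v (k - 2), ((G.neighborFinset v).filter (fun u => G.dist u x = k - 1)).card := by
      calc (∑ u ∈ G.neighborFinset v, (M u v).card)
          = ∑ u ∈ G.neighborFinset v, ∑ x ∈ L v (k - 2),
              if G.dist u x = k - 1 then 1 else 0 := Finset.sum_congr rfl fun u _ => hrw u
        _ = ∑ x ∈ L v (k - 2), ∑ u ∈ G.neighborFinset v,
              if G.dist u x = k - 1 then 1 else 0 := Finset.sum_comm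
        _ = _ := Finset.sum_congr rfl fun x _ => (Finset.card_filter _ _).symm
    rw [hswap]
    have hbound : ∀ x ∈ L v (k - 2),
        G.degree v - 1 ≤ ((G.neighborFinset v).filter (fun u => G.dist u x = k - 1)).card := by
      intro x hx
      rw [hmemL] at hx
      obtain ⟨hrv, hdv⟩ := hx
      have hneg : ((G.neighborFinset v).filter (fun u => ¬ G.dist u x = k - 1)).card ≤ 1 := by
        have hprop : ∀ u ∈ (G.neighborFinset v).filter (fun u => ¬ G.dist u x = k - 1),
            G.dist u x = k - 3 ∧ 3 ≤ k := by
          intro u hu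
          rw [Finset.mem_filter, SimpleGraph.mem_neighborFinset] at hu
          obtain ⟨hadj, hnd⟩ := hu
          have hru : G.Reachable u x := hadj.symm.reachable.trans hrv
          have h1 : G.dist u x ≤ G.dist v x + 1 := Stmt7Aux.dist_succ hadj.symm hrv
          have h2 : G.dist v x ≤ G.dist u x + 1 := Stmt7Aux.dist_succ hadj hru
          have h3 : G.dist u x ≠ k - 2 := by
            intro hh
            exact Stmt7Aux.near hg hadj.symm hru hrv (by omega) (by omega)
          omega
        refine Finset.card_le_one.mpr fun u hu u' hu' => ?_
        have hp1 := hprop u hu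
        have hp2 := hprop u' hu'
        rw [Finset.mem_filter, SimpleGraph.mem_neighborFinset] at hu hu'
        by_contra hne
        refine Stmt7Aux.uniq (j := k - 3) hg hu.1 hu'.1 hne
          (hu.1.symm.reachable.trans hrv) (hu'.1.symm.reachable.trans hrv)
          hp1.1 hp2.1 (by omega) (by omega)
      have hsplit := Finset.card_filter_add_card_filter_not
        (s := G.neighborFinset v) (fun u => G.dist u x = k - 1)
      rw [SimpleGraph.card_neighborFinset_eq_degree] at hsplit
      omega
    calc (G.degree v - 1) * (L v (k - 2)).card
        = ∑ _x ∈ L v (k - 2), (G.degree v - 1) := by rw [Finset.sum_const, smul_eq_mul, mul_comm]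
      _ ≤ _ := Finset.sum_le_sum hbound
  -- for a fixed u, the M-sets over its neighbours have total size at most its (k-1)-level
  have hsumMu : ∀ u : V, (∑ v ∈ G.neighborFinset u, (M u v).card) ≤ (L u (k - 1)).card := by
    intro u
    have hrw : ∀ v ∈ G.neighborFinset u,
        (M u v).card = ∑ x ∈ L u (k - 1), if G.dist v x = k - 2 then 1 else 0 := by
      intro v hv
      rw [SimpleGraph.mem_neighborFinset] at hv
      have hEq : M u v = (L u (k - 1)).filter (fun x => G.dist v x = k - 2) := by
        ext x
        rw [hmemM, Finset.mem_filter, hmemL]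
        constructor
        · rintro ⟨⟨h1, h2⟩, h3⟩
          exact ⟨⟨hv.reachable.trans h1, h3⟩, h2⟩
        · rintro ⟨⟨h1, h2⟩, h3⟩
          exact ⟨⟨hv.symm.reachable.trans h1, h3⟩, h2⟩
      rw [hEq]
      exact Finset.card_filter _ _
    calc (∑ v ∈ G.neighborFinset u, (M u v).card)
        = ∑ v ∈ G.neighborFinset u, ∑ x ∈ L u (k - 1),
            if G.dist v x = k - 2 then 1 else 0 := Finset.sum_congr rfl hrw
      _ = ∑ x ∈ L u (k - 1), ∑ v ∈ G.neighborFinset u,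
            if G.dist v x = k - 2 then 1 else 0 := Finset.sum_comm
      _ ≤ ∑ _x ∈ L u (k - 1), 1 := by
          refine Finset.sum_le_sum fun x hx => ?_
          rw [← Finset.card_filter]
          rw [hmemL] at hx
          refine Finset.card_le_one.mpr fun w hw w' hw' => ?_
          rw [Finset.mem_filter, SimpleGraph.mem_neighborFinset] at hw hw'
          by_contra hne
          refine Stmt7Aux.uniq (j := k - 2) hg hw.1 hw'.1 hne
            (hw.1.symm.reachable.trans hx.1) (hw'.1.symm.reachable.trans hx.1)
            hw.2 hw'.2 (by omega) (by omega)
      _ = (L u (k - 1)).card := by simp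
  -- the per-vertex inequality, in the reals
  have hperv : ∀ v : V,
      (G.degree v : ℝ) ^ 2 * ((L v (k - 2)).card : ℝ) /
          (((L v k).card : ℝ) + (G.degree v : ℝ) * ((L v (k - 2)).card : ℝ))
        ≤ 2 * ∑ u ∈ G.neighborFinset v, ((M u v).card : ℝ) / ((L u (k - 1)).card : ℝ) := by
    intro v
    have hd4 : (4 : ℝ) ≤ (G.degree v : ℝ) := by exact_mod_cast hmin v
    have hb1 : (1 : ℝ) ≤ ((L v (k - 2)).card : ℝ) := by
      have := (hnonempty v (k - 2) (by omega)).card_pos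
      exact_mod_cast this
    have hD1 : ∀ u ∈ G.neighborFinset v, (1 : ℝ) ≤ ((L u (k - 1)).card : ℝ) := by
      intro u _
      have := (hnonempty u (k - 1) le_rfl).card_pos
      exact_mod_cast this
    have hcardNv : ((G.neighborFinset v).card : ℝ) = (G.degree v : ℝ) := by
      rw [SimpleGraph.card_neighborFinset_eq_degree]
    refine Stmt7Aux.arith (G.neighborFinset v) (fun u => ((M u v).card : ℝ))
      (fun u => ((L u (k - 1)).card : ℝ)) (fun u => ((A u v).card : ℝ))
      ((L v k).card : ℝ) ((L v (k - 2)).card : ℝ) (G.degree v : ℝ)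
      hd4 hb1 (Nat.cast_nonneg _)
      (fun u _ => Nat.cast_nonneg _) (fun u _ => Nat.cast_nonneg _) hD1
      (fun u _ => by
        show ((M u v).card : ℝ) ≤ ((L v (k - 2)).card : ℝ)
        exact_mod_cast hMub u v)
      (fun u hu => by
        rw [SimpleGraph.mem_neighborFinset] at hu
        show ((L u (k - 1)).card : ℝ) ≤ ((A u v).card : ℝ) + ((M u v).card : ℝ)
        exact_mod_cast hpart v u hu)
      (by rw [← Nat.cast_sum]; exact_mod_cast hsumA v)
      ?_ ?_
    · have h := hsumM_lb v
      have hcast : ((G.degree v - 1 : ℕ) : ℝ) = (G.degree v : ℝ) - 1 := by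
        have h4 := hmin v
        rw [Nat.cast_sub (by omega)]
        norm_num
      calc ((G.degree v : ℝ) - 1) * ((L v (k - 2)).card : ℝ)
          = (((G.degree v - 1) * (L v (k - 2)).card : ℕ) : ℝ) := by
            rw [Nat.cast_mul, hcast]
        _ ≤ ((∑ u ∈ G.neighborFinset v, (M u v).card : ℕ) : ℝ) := by exact_mod_cast h
        _ = ∑ u ∈ G.neighborFinset v, ((M u v).card : ℝ) := by rw [Nat.cast_sum]
    · calc (∑ u ∈ G.neighborFinset v, ((M u v).card : ℝ))
          ≤ ∑ _u ∈ G.neighborFinset v, ((L v (k - 2)).card : ℝ) :=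
            Finset.sum_le_sum fun u _ => by exact_mod_cast hMub u v
        _ = ((G.neighborFinset v).card : ℝ) * ((L v (k - 2)).card : ℝ) := by
            rw [Finset.sum_const, nsmul_eq_mul]
        _ = (G.degree v : ℝ) * ((L v (k - 2)).card : ℝ) := by rw [hcardNv]
  -- put everything together
  have hstep : ∑ v : V, (G.degree v : ℝ) ^ 2 * (distCount G v (k - 2) : ℝ) /
        ((distCount G v k : ℝ) + (G.degree v : ℝ) * (distCount G v (k - 2) : ℝ))
      ≤ ∑ v : V, 2 * ∑ u ∈ G.neighborFinset v,
          ((M u v).card : ℝ) / ((L u (k - 1)).card : ℝ) := by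
    refine Finset.sum_le_sum fun v _ => ?_
    have e1 : (distCount G v (k - 2) : ℝ) = ((L v (k - 2)).card : ℝ) := by
      exact_mod_cast congrArg (Nat.cast (R := ℝ)) (hdc v (k - 2))
    have e2 : (distCount G v k : ℝ) = ((L v k).card : ℝ) := by
      exact_mod_cast congrArg (Nat.cast (R := ℝ)) (hdc v k)
    rw [e1, e2]
    exact hperv v
  have hswap : (∑ v : V, ∑ u ∈ G.neighborFinset v,
        ((M u v).card : ℝ) / ((L u (k - 1)).card : ℝ))
      = ∑ u : V, ∑ v ∈ G.neighborFinset u,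
        ((M u v).card : ℝ) / ((L u (k - 1)).card : ℝ) := by
    refine Finset.sum_comm' fun v u => ?_
    simp only [Finset.mem_univ, true_and, and_true, SimpleGraph.mem_neighborFinset]
    exact ⟨fun h => h.symm, fun h => h.symm⟩
  have hfinal : ∀ u : V,
      (∑ v ∈ G.neighborFinset u, ((M u v).card : ℝ) / ((L u (k - 1)).card : ℝ)) ≤ 1 := by
    intro u
    rw [← Finset.sum_div]
    have hDpos : (0 : ℝ) < ((L u (k - 1)).card : ℝ) := by
      have := (hnonempty u (k - 1) le_rfl).card_pos
      exact_mod_cast this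
    rw [div_le_one hDpos]
    calc (∑ v ∈ G.neighborFinset u, ((M u v).card : ℝ))
        = ((∑ v ∈ G.neighborFinset u, (M u v).card : ℕ) : ℝ) := by rw [Nat.cast_sum]
      _ ≤ ((L u (k - 1)).card : ℝ) := by exact_mod_cast hsumMu u
  calc ∑ v : V, (G.degree v : ℝ) ^ 2 * (distCount G v (k - 2) : ℝ) /
        ((distCount G v k : ℝ) + (G.degree v : ℝ) * (distCount G v (k - 2) : ℝ))
      ≤ ∑ v : V, 2 * ∑ u ∈ G.neighborFinset v,
          ((M u v).card : ℝ) / ((L u (k - 1)).card : ℝ) := hstep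
    _ = 2 * ∑ v : V, ∑ u ∈ G.neighborFinset v,
          ((M u v).card : ℝ) / ((L u (k - 1)).card : ℝ) := by rw [Finset.mul_sum]
    _ = 2 * ∑ u : V, ∑ v ∈ G.neighborFinset u,
          ((M u v).card : ℝ) / ((L u (k - 1)).card : ℝ) := by rw [hswap]
    _ ≤ 2 * ∑ _u : V, (1 : ℝ) := by
        refine mul_le_mul_of_nonneg_left (Finset.sum_le_sum fun u _ => hfinal u) (by norm_num)
    _ = 2 * (Fintype.card V : ℝ) := by simp
end

section
/- Let k ≥ 3 and let G=(V,E) be a simple graph on n vertices with girth at least 2k+1. Define V_low = {v : d_1(v) ≤ n^(1/k)}, V_med = {v : n^((k-2)/(k-1))·d_1(v)^(1/(k-1)) ≤ d_{k-1}(v)}, and for 0 ≤ j ≤ ⌊(k-3)/2⌋, V_{high,j} = {v : d_{k-2j-1}(v) ≤ n^(1/(k-1))·d_{k-2j-3}(v)·d_1(v)^((k-2)/(k-1))}. Then V = V_low ∪ V_med ∪ (∪_j V_{high,j}). -/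
open SimpleGraph Finset

lemma distCount_zero {V : Type*} (G : SimpleGraph V) (v : V) : distCount G v 0 = 1 := by
  unfold distCount
  have : {w : V | G.Reachable v w ∧ G.dist v w = 0} = {v} := by
    ext w
    simp only [Set.mem_setOf_eq, Set.mem_singleton_iff]
    constructor
    · rintro ⟨hr, hd⟩
      exact (hr.dist_eq_zero_iff.mp hd).symm
    · rintro rfl
      refine ⟨Reachable.refl _, ?_⟩
      simp
  rw [this, Set.ncard_singleton]

lemma distCount_one {V : Type*} [Fintype V] [DecidableEq V] (G : SimpleGraph V)
    [DecidableRel G.Adj] (v : V) : distCount G v 1 = G.degree v := by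
  unfold distCount
  have : {w : V | G.Reachable v w ∧ G.dist v w = 1} = G.neighborSet v := by
    ext w
    simp only [Set.mem_setOf_eq, mem_neighborSet]
    constructor
    · rintro ⟨_, hd⟩
      exact SimpleGraph.dist_eq_one_iff_adj.mp hd
    · intro h
      exact ⟨h.reachable, SimpleGraph.dist_eq_one_iff_adj.mpr h⟩
  rw [this, Set.ncard_eq_toFinset_card']
  rfl

lemma key_rpow (K n d p p' q q' : ℝ) (hK : 0 < K) (hn : 1 ≤ n) (hd : n ^ (1 / K) ≤ d)
    (hδ : p' ≤ p) (he : q' = q + K * (p - p')) : n ^ p * d ^ q ≤ n ^ p' * d ^ q' := by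
  have hn0 : (0 : ℝ) < n := lt_of_lt_of_le one_pos hn
  have h1d : (1 : ℝ) ≤ n ^ (1 / K) := by
    calc (1 : ℝ) = 1 ^ (1 / K) := (Real.one_rpow _).symm
    _ ≤ n ^ (1 / K) := Real.rpow_le_rpow zero_le_one hn (by positivity)
  have hd0 : (0 : ℝ) < d := lt_of_lt_of_le one_pos (le_trans h1d hd)
  have h1 : n ^ p = n ^ p' * n ^ (p - p') := by
    rw [← Real.rpow_add hn0]; ring_nf
  have h2 : n ^ (p - p') = (n ^ (1 / K)) ^ (K * (p - p')) := by
    rw [← Real.rpow_mul (le_of_lt hn0)]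
    congr 1
    field_simp
  have h3 : (n ^ (1 / K)) ^ (K * (p - p')) ≤ d ^ (K * (p - p')) :=
    Real.rpow_le_rpow (Real.rpow_nonneg (le_of_lt hn0) _) hd
      (mul_nonneg (le_of_lt hK) (by linarith))
  calc n ^ p * d ^ q = n ^ p' * (n ^ (p - p') * d ^ q) := by rw [h1]; ring
    _ ≤ n ^ p' * (d ^ (K * (p - p')) * d ^ q) := by
        apply mul_le_mul_of_nonneg_left _ (Real.rpow_nonneg (le_of_lt hn0) _)
        apply mul_le_mul_of_nonneg_right _ (Real.rpow_nonneg (le_of_lt hd0) _)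
        rw [h2] at *; exact h3
    _ = n ^ p' * d ^ q' := by rw [← Real.rpow_add hd0, he]; ring_nf

theorem stmt8 {V : Type*} [Fintype V] [DecidableEq V] (G : SimpleGraph V)
    [DecidableRel G.Adj] (k : ℕ) (hk : 3 ≤ k) (hg : (2 * k + 1 : ℕ∞) ≤ G.girth)
    (v : V) :
    ((G.degree v : ℝ) ≤ (Fintype.card V : ℝ) ^ ((1 : ℝ) / k)) ∨
    ((Fintype.card V : ℝ) ^ (((k : ℝ) - 2) / ((k : ℝ) - 1)) *
        (G.degree v : ℝ) ^ ((1 : ℝ) / ((k : ℝ) - 1)) ≤ (distCount G v (k - 1) : ℝ)) ∨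
    (∃ j : ℕ, j ≤ (k - 3) / 2 ∧
      (distCount G v (k - 2 * j - 1) : ℝ) ≤
        (Fintype.card V : ℝ) ^ ((1 : ℝ) / ((k : ℝ) - 1)) *
          (distCount G v (k - 2 * j - 3) : ℝ) *
          (G.degree v : ℝ) ^ (((k : ℝ) - 2) / ((k : ℝ) - 1))) := by
  by_contra hcon
  push_neg at hcon
  obtain ⟨hA, hB, hC⟩ := hcon
  set n : ℝ := (Fintype.card V : ℝ) with hn_def
  set d : ℝ := (G.degree v : ℝ) with hd_def
  set K : ℝ := (k : ℝ) with hK_def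
  have hK3 : (3 : ℝ) ≤ K := by rw [hK_def]; exact_mod_cast hk
  have hK0 : (0 : ℝ) < K := by linarith
  have hn1 : (1 : ℝ) ≤ n := by
    have h0 : 0 < Fintype.card V := Fintype.card_pos_iff.mpr ⟨v⟩
    rw [hn_def]; exact_mod_cast h0
  have hn0 : (0 : ℝ) < n := lt_of_lt_of_le one_pos hn1
  have hAd : n ^ ((1 : ℝ) / K) < d := hA
  have hd0 : (0 : ℝ) < d := by
    have : (0 : ℝ) < n ^ ((1 : ℝ) / K) := Real.rpow_pos_of_pos hn0 _
    linarith
  set c : ℝ := n ^ ((1 : ℝ) / (K - 1)) * d ^ ((K - 2) / (K - 1)) with hc_def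
  have hc0 : (0 : ℝ) < c := by
    apply mul_pos (Real.rpow_pos_of_pos hn0 _) (Real.rpow_pos_of_pos hd0 _)
  set M : ℕ := (k - 3) / 2 with hM_def
  have hC' : ∀ j : ℕ, j ≤ M →
      c * (distCount G v (k - 2 * j - 3) : ℝ) < (distCount G v (k - 2 * j - 1) : ℝ) := by
    intro j hj
    have := hC j hj
    calc c * (distCount G v (k - 2 * j - 3) : ℝ)
        = n ^ ((1 : ℝ) / (K - 1)) * (distCount G v (k - 2 * j - 3) : ℝ) *
          d ^ ((K - 2) / (K - 1)) := by rw [hc_def]; ring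
      _ < _ := this
  have chain : ∀ j : ℕ, j ≤ M →
      c ^ (j + 1) * (distCount G v (k - 2 * j - 3) : ℝ) < (distCount G v (k - 1) : ℝ) := by
    intro j
    induction j with
    | zero =>
      intro h
      have h0 := hC' 0 h
      simpa using h0
    | succ i ih =>
      intro h
      have hi : i ≤ M := Nat.le_of_succ_le h
      have h2 := hC' (i + 1) h
      have hidx : k - 2 * (i + 1) - 1 = k - 2 * i - 3 := by omega
      rw [hidx] at h2
      calc c ^ (i + 1 + 1) * (distCount G v (k - 2 * (i + 1) - 3) : ℝ)
          = c ^ (i + 1) * (c * (distCount G v (k - 2 * (i + 1) - 3) : ℝ)) := by ring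
        _ < c ^ (i + 1) * (distCount G v (k - 2 * i - 3) : ℝ) :=
            mul_lt_mul_of_pos_left h2 (pow_pos hc0 _)
        _ < _ := ih hi
  have hfin := chain M le_rfl
  have hBlt : (distCount G v (k - 1) : ℝ) <
      n ^ ((K - 2) / (K - 1)) * d ^ ((1 : ℝ) / (K - 1)) := hB
  -- compute c ^ (M+1)
  have hcpow : ∀ mm : ℕ, c ^ (mm : ℕ) =
      n ^ ((mm : ℝ) / (K - 1)) * d ^ ((mm : ℝ) * (K - 2) / (K - 1)) := by
    intro mm
    rw [hc_def, mul_pow, ← Real.rpow_natCast (n ^ ((1 : ℝ) / (K - 1))) mm,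
      ← Real.rpow_natCast (d ^ ((K - 2) / (K - 1))) mm,
      ← Real.rpow_mul (le_of_lt hn0), ← Real.rpow_mul (le_of_lt hd0)]
    ring_nf
  have hK1 : K - 1 ≠ 0 := by linarith
  rcases Nat.even_or_odd k with hke | hko
  · -- k even : k = 2 * m + 4
    obtain ⟨mm, hmm⟩ : ∃ mm : ℕ, k = 2 * mm + 4 := by
      obtain ⟨t, ht⟩ := hke; exact ⟨t - 2, by omega⟩
    have hMval : M = mm := by rw [hM_def]; omega
    have hbase : k - 2 * mm - 3 = 1 := by omega
    have hKm : K = 2 * (mm : ℝ) + 4 := by rw [hK_def, hmm]; push_cast; ring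
    rw [hMval] at hfin
    rw [hbase, distCount_one] at hfin
    -- hfin : c ^ (mm+1) * d < distCount (k-1)
    have hup : n ^ ((K - 2) / (K - 1)) * d ^ ((1 : ℝ) / (K - 1)) ≤
        c ^ (mm + 1) * d := by
      have hcp := hcpow (mm + 1)
      push_cast at hcp
      rw [hcp]
      calc n ^ ((K - 2) / (K - 1)) * d ^ ((1 : ℝ) / (K - 1)) ≤
          n ^ (((mm : ℝ) + 1) / (K - 1)) * d ^ (((mm : ℝ) + 1) * (K - 2) / (K - 1) + 1) := by
            apply key_rpow K n d _ _ _ _ hK0 hn1 (le_of_lt hAd)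
            · rw [hKm]
              have hm0 : (0 : ℝ) ≤ (mm : ℝ) := Nat.cast_nonneg mm
              have h1 : (0 : ℝ) < 2 * (mm : ℝ) + 4 - 1 := by linarith
              rw [div_le_div_iff₀ h1 h1]
              nlinarith [sq_nonneg ((mm : ℝ))]
            · rw [hKm]
              have hm0 : (0 : ℝ) ≤ (mm : ℝ) := Nat.cast_nonneg mm
              have h1 : (2 : ℝ) * (mm : ℝ) + 4 - 1 ≠ 0 := ne_of_gt (by linarith)
              linear_combination (-1 : ℝ) * mul_inv_cancel₀ h1
        _ = n ^ (((mm : ℝ) + 1) / (K - 1)) * d ^ (((mm : ℝ) + 1) * (K - 2) / (K - 1)) * d := by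
            rw [Real.rpow_add hd0, Real.rpow_one]; ring
    linarith
  · -- k odd : k = 2 * m + 3
    obtain ⟨mm, hmm⟩ : ∃ mm : ℕ, k = 2 * mm + 3 := by
      obtain ⟨t, ht⟩ := hko; exact ⟨t - 1, by omega⟩
    have hMval : M = mm := by rw [hM_def]; omega
    have hbase : k - 2 * mm - 3 = 0 := by omega
    have hKm : K = 2 * (mm : ℝ) + 3 := by rw [hK_def, hmm]; push_cast; ring
    rw [hMval] at hfin
    rw [hbase, distCount_zero] at hfin
    push_cast at hfin
    rw [mul_one] at hfin
    have hup : n ^ ((K - 2) / (K - 1)) * d ^ ((1 : ℝ) / (K - 1)) ≤ c ^ (mm + 1) := by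
      have hcp := hcpow (mm + 1)
      push_cast at hcp
      rw [hcp]
      apply key_rpow K n d _ _ _ _ hK0 hn1 (le_of_lt hAd)
      · rw [hKm]
        have hm0 : (0 : ℝ) ≤ (mm : ℝ) := Nat.cast_nonneg mm
        have h1 : (0 : ℝ) < 2 * (mm : ℝ) + 3 - 1 := by linarith
        rw [div_le_div_iff₀ h1 h1]
        nlinarith [sq_nonneg ((mm : ℝ))]
      · rw [hKm]
        have hm0 : (0 : ℝ) ≤ (mm : ℝ) := Nat.cast_nonneg mm
        have h1 : (2 : ℝ) * (mm : ℝ) + 3 - 1 ≠ 0 := ne_of_gt (by linarith)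
        field_simp
        ring
    linarith
end

section
/- Let k ≥ 2 and let G be a simple graph on n vertices with girth at least 2k+1. Then Σ_{v ∈ V} d_1(v)·d_{k-1}(v) ≤ n². -/
open SimpleGraph Finset

namespace Stmt10Aux

variable {V : Type*}

/-- Two distinct paths between the same endpoints produce a cycle whose length is at most
the sum of the lengths. -/
lemma cycle_of_two_paths (G : SimpleGraph V) [DecidableEq V] :
    ∀ (N : ℕ) {x y : V} (p q : G.Walk x y), p.IsPath → q.IsPath → p ≠ q →
      2 * p.length + q.length ≤ N →
      ∃ (z : V) (c : G.Walk z z), c.IsCycle ∧ c.length ≤ p.length + q.length := by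
  intro N
  induction N with
  | zero =>
    intro x y p q hp hq hne hlen
    have hp0 : p.length = 0 := by omega
    have hxy : x = y := SimpleGraph.Walk.eq_of_length_eq_zero hp0
    subst hxy
    rw [SimpleGraph.Walk.isPath_iff_eq_nil] at hp hq
    exact absurd (hp.trans hq.symm) hne
  | succ N ih =>
    intro x y p q hp hq hne hlen
    by_cases hxy : x = y
    · subst hxy
      rw [SimpleGraph.Walk.isPath_iff_eq_nil] at hp hq
      exact absurd (hp.trans hq.symm) hne
    obtain ⟨a, ha, p', rfl⟩ := SimpleGraph.Walk.exists_eq_cons_of_ne hxy p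
    obtain ⟨b, hb, q', rfl⟩ := SimpleGraph.Walk.exists_eq_cons_of_ne hxy q
    rw [SimpleGraph.Walk.cons_isPath_iff] at hp hq
    simp only [SimpleGraph.Walk.length_cons] at hlen ⊢
    by_cases hab : a = b
    · subst hab
      have hpq' : p' ≠ q' := by rintro rfl; exact hne rfl
      obtain ⟨z, c, hc, hcl⟩ := ih p' q' hp.1 hq.1 hpq' (by omega)
      exact ⟨z, c, hc, by omega⟩
    · by_cases hmem : a ∈ q'.support
      · refine ⟨a, SimpleGraph.Walk.cons ha.symm
          (SimpleGraph.Walk.cons hb (q'.takeUntil a hmem)), ?_, ?_⟩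
        · rw [SimpleGraph.Walk.cons_isCycle_iff]
          refine ⟨?_, ?_⟩
          · rw [SimpleGraph.Walk.cons_isPath_iff]
            exact ⟨hq.1.takeUntil _,
              fun hx => hq.2 (SimpleGraph.Walk.support_takeUntil_subset _ _ hx)⟩
          · simp only [SimpleGraph.Walk.edges_cons, List.mem_cons]
            rintro (h | h)
            · rw [Sym2.eq_iff] at h
              rcases h with ⟨h1, _⟩ | ⟨h1, _⟩
              · exact ha.ne' h1
              · exact hab h1
            · exact hq.2 (SimpleGraph.Walk.support_takeUntil_subset _ _
                (SimpleGraph.Walk.snd_mem_support_of_mem_edges _ h))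
        · have hle := SimpleGraph.Walk.length_takeUntil_le q' hmem
          simp only [SimpleGraph.Walk.length_cons]
          omega
      · have haq : a ∉ (SimpleGraph.Walk.cons hb q').support := by
          rw [SimpleGraph.Walk.support_cons, List.mem_cons]
          rintro (h | h)
          · exact ha.ne' h
          · exact hmem h
        have hq2 : (SimpleGraph.Walk.cons ha.symm (SimpleGraph.Walk.cons hb q')).IsPath := by
          rw [SimpleGraph.Walk.cons_isPath_iff]
          refine ⟨?_, haq⟩
          rw [SimpleGraph.Walk.cons_isPath_iff]
          exact hq
        have hne2 : p' ≠ SimpleGraph.Walk.cons ha.symm (SimpleGraph.Walk.cons hb q') := by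
          intro h
          apply hp.2
          rw [h]
          simp [SimpleGraph.Walk.support_cons]
        obtain ⟨z, c, hc, hcl⟩ := ih p' _ hp.1 hq2 hne2
          (by simp only [SimpleGraph.Walk.length_cons]; omega)
        refine ⟨z, c, hc, ?_⟩
        simp only [SimpleGraph.Walk.length_cons] at hcl
        omega

/-- Under a girth hypothesis, there are no two distinct short paths between the same points. -/
lemma no_two_short_paths (G : SimpleGraph V) [DecidableEq V] {k : ℕ}
    (hg : (2 * k + 1 : ℕ∞) ≤ G.egirth) {x y : V} (p q : G.Walk x y)
    (hp : p.IsPath) (hq : q.IsPath) (hne : p ≠ q)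
    (hlen : p.length + q.length ≤ 2 * k) : False := by
  obtain ⟨z, c, hc, hcl⟩ :=
    cycle_of_two_paths G (2 * p.length + q.length) p q hp hq hne le_rfl
  have h2 : (2 * k + 1 : ℕ∞) ≤ (c.length : ℕ∞) := le_egirth.mp hg z c hc
  have h3 : 2 * k + 1 ≤ c.length := by exact_mod_cast h2
  omega

/-- If `u` lies on a walk from `v` to `w` and `u ≠ v`, then `dist u w + 1 ≤` the walk's length. -/
lemma dist_add_one_le_of_mem (G : SimpleGraph V) [DecidableEq V] {v w u : V}
    {P : G.Walk v w} (hu : u ∈ P.support) (hne : u ≠ v) :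
    G.dist u w + 1 ≤ P.length := by
  have hs : ((P.takeUntil u hu).append (P.dropUntil u hu)) = P := P.take_spec hu
  have h1 : (P.takeUntil u hu).length + (P.dropUntil u hu).length = P.length := by
    rw [← SimpleGraph.Walk.length_append, hs]
  have h2 : 1 ≤ (P.takeUntil u hu).length := by
    by_contra h
    push_neg at h
    have h0 : (P.takeUntil u hu).length = 0 := by omega
    exact hne (SimpleGraph.Walk.eq_of_length_eq_zero h0).symm
  have h3 := SimpleGraph.dist_le (P.dropUntil u hu)
  omega

end Stmt10Aux

open Stmt10Aux in
theorem stmt10 {V : Type*} [Fintype V] [DecidableEq V] (G : SimpleGraph V)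
    [DecidableRel G.Adj] (k : ℕ) (hk : 2 ≤ k) (hg : (2 * k + 1 : ℕ∞) ≤ G.girth) :
    ∑ v : V, G.degree v * distCount G v (k - 1) ≤ (Fintype.card V) ^ 2 := by
  classical
  have hg' : (2 * k + 1 : ℕ∞) ≤ G.egirth := by
    refine le_trans hg ?_
    unfold SimpleGraph.girth
    exact ENat.coe_toNat_le_self _
  -- basic distance facts
  -- range of dist u w for u adjacent to v with dist v w = k-1
  have hrange : ∀ u v w : V, G.Adj u v → G.Reachable v w → G.dist v w = k - 1 →
      k - 2 ≤ G.dist u w ∧ G.dist u w ≤ k := by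
    intro u v w e hr hd
    obtain ⟨P, hP, hPl⟩ := hr.exists_path_of_dist
    have hru : G.Reachable u w := (SimpleGraph.Adj.reachable e).trans hr
    obtain ⟨Q, hQ, hQl⟩ := hru.exists_path_of_dist
    have h1 : G.dist u w ≤ (SimpleGraph.Walk.cons e P).length := SimpleGraph.dist_le _
    have h2 : G.dist v w ≤ (SimpleGraph.Walk.cons e.symm Q).length := SimpleGraph.dist_le _
    simp only [SimpleGraph.Walk.length_cons] at h1 h2
    omega
  -- no adjacent pair can both be at distance k-1 from w
  have hB : ∀ u v w : V, G.Adj u v → G.Reachable v w → G.dist v w = k - 1 →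
      G.dist u w ≠ k - 1 := by
    intro u v w e hr hd hd'
    obtain ⟨P, hP, hPl⟩ := hr.exists_path_of_dist
    have hru : G.Reachable u w := (SimpleGraph.Adj.reachable e).trans hr
    obtain ⟨Q, hQ, hQl⟩ := hru.exists_path_of_dist
    have hu_notin : u ∉ P.support := by
      intro hmem
      have := dist_add_one_le_of_mem G hmem e.ne
      omega
    have hcons : (SimpleGraph.Walk.cons e P).IsPath :=
      (SimpleGraph.Walk.cons_isPath_iff e P).2 ⟨hP, hu_notin⟩
    have hne : SimpleGraph.Walk.cons e P ≠ Q := by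
      intro h
      have hl : (SimpleGraph.Walk.cons e P).length = Q.length := by rw [h]
      simp only [SimpleGraph.Walk.length_cons] at hl
      omega
    exact no_two_short_paths G hg' _ Q hcons hQ hne
      (by simp only [SimpleGraph.Walk.length_cons]; omega)
  -- type A uniqueness: dist u w = k determines the neighbor v
  have hA : ∀ u w v1 v2 : V, G.Adj u v1 → G.Adj u v2 →
      G.Reachable v1 w → G.Reachable v2 w →
      G.dist v1 w = k - 1 → G.dist v2 w = k - 1 → G.dist u w = k → v1 = v2 := by
    intro u w v1 v2 e1 e2 hr1 hr2 h1 h2 hu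
    by_contra hv
    obtain ⟨P1, hP1, hP1l⟩ := hr1.exists_path_of_dist
    obtain ⟨P2, hP2, hP2l⟩ := hr2.exists_path_of_dist
    have hu1 : u ∉ P1.support := by
      intro hmem
      have := dist_add_one_le_of_mem G hmem e1.ne
      omega
    have hu2 : u ∉ P2.support := by
      intro hmem
      have := dist_add_one_le_of_mem G hmem e2.ne
      omega
    have hc1 : (SimpleGraph.Walk.cons e1 P1).IsPath :=
      (SimpleGraph.Walk.cons_isPath_iff e1 P1).2 ⟨hP1, hu1⟩
    have hc2 : (SimpleGraph.Walk.cons e2 P2).IsPath :=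
      (SimpleGraph.Walk.cons_isPath_iff e2 P2).2 ⟨hP2, hu2⟩
    have hne : SimpleGraph.Walk.cons e1 P1 ≠ SimpleGraph.Walk.cons e2 P2 := by
      intro h
      apply hv
      have hsupp := congrArg SimpleGraph.Walk.support h
      rw [SimpleGraph.Walk.support_cons, SimpleGraph.Walk.support_cons,
        SimpleGraph.Walk.support_eq_cons P1, SimpleGraph.Walk.support_eq_cons P2] at hsupp
      simp only [List.cons.injEq] at hsupp
      exact hsupp.2.1
    exact no_two_short_paths G hg' _ _ hc1 hc2 hne
      (by simp only [SimpleGraph.Walk.length_cons]; omega)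
  -- type C uniqueness: given v, w, the neighbor u with dist u w = k-2 is unique
  have hC : ∀ v w u1 u2 : V, G.Adj u1 v → G.Adj u2 v → G.Reachable v w →
      G.dist v w = k - 1 → G.dist u1 w = k - 2 → G.dist u2 w = k - 2 → u1 = u2 := by
    intro v w u1 u2 e1 e2 hrv hdv hd1 hd2
    by_contra hu
    have hr1 : G.Reachable u1 w := (SimpleGraph.Adj.reachable e1).trans hrv
    have hr2 : G.Reachable u2 w := (SimpleGraph.Adj.reachable e2).trans hrv
    obtain ⟨Q1, hQ1, hQ1l⟩ := hr1.exists_path_of_dist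
    obtain ⟨Q2, hQ2, hQ2l⟩ := hr2.exists_path_of_dist
    have hv1 : v ∉ Q1.support := by
      intro hmem
      have := dist_add_one_le_of_mem G hmem e1.ne'
      omega
    have hv2 : v ∉ Q2.support := by
      intro hmem
      have := dist_add_one_le_of_mem G hmem e2.ne'
      omega
    have hc1 : (SimpleGraph.Walk.cons e1.symm Q1).IsPath :=
      (SimpleGraph.Walk.cons_isPath_iff e1.symm Q1).2 ⟨hQ1, hv1⟩
    have hc2 : (SimpleGraph.Walk.cons e2.symm Q2).IsPath :=
      (SimpleGraph.Walk.cons_isPath_iff e2.symm Q2).2 ⟨hQ2, hv2⟩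
    have hne : SimpleGraph.Walk.cons e1.symm Q1 ≠ SimpleGraph.Walk.cons e2.symm Q2 := by
      intro h
      apply hu
      have hsupp := congrArg SimpleGraph.Walk.support h
      rw [SimpleGraph.Walk.support_cons, SimpleGraph.Walk.support_cons,
        SimpleGraph.Walk.support_eq_cons Q1, SimpleGraph.Walk.support_eq_cons Q2] at hsupp
      simp only [List.cons.injEq] at hsupp
      exact hsupp.2.1
    exact no_two_short_paths G hg' _ _ hc1 hc2 hne
      (by simp only [SimpleGraph.Walk.length_cons]; omega)
  -- counting
  let A : V → Finset V := fun v => univ.filter fun w => G.Reachable v w ∧ G.dist v w = k - 1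
  have hcount : ∀ v, distCount G v (k - 1) = (A v).card := by
    intro v
    rw [distCount, ← Set.ncard_coe_finset]
    congr 1
    ext w
    simp [A]
  have hsum : ∑ v : V, G.degree v * distCount G v (k - 1)
      = (univ.sigma fun v => (G.neighborFinset v) ×ˢ (A v)).card := by
    rw [Finset.card_sigma]
    refine Finset.sum_congr rfl fun v _ => ?_
    rw [Finset.card_product, hcount]
    rfl
  rw [hsum]
  have hinj : ∀ t1 ∈ (univ.sigma fun v => (G.neighborFinset v) ×ˢ (A v)),
      ∀ t2 ∈ (univ.sigma fun v => (G.neighborFinset v) ×ˢ (A v)),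
      (fun t : Σ _ : V, V × V =>
        if G.dist t.2.1 t.2.2 = k then (t.2.1, t.2.2) else (t.2.2, t.1)) t1 =
      (fun t : Σ _ : V, V × V =>
        if G.dist t.2.1 t.2.2 = k then (t.2.1, t.2.2) else (t.2.2, t.1)) t2 → t1 = t2 := by
    rintro ⟨v1, u1, w1⟩ h1 ⟨v2, u2, w2⟩ h2 heq
    simp only [Finset.mem_sigma, Finset.mem_product, Finset.mem_univ, true_and,
      SimpleGraph.mem_neighborFinset, Finset.mem_filter, A] at h1 h2
    have e1 := h1.1
    have hr1 := h1.2.1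
    have hd1 := h1.2.2
    have e2 := h2.1
    have hr2 := h2.2.1
    have hd2 := h2.2.2
    have hrange1 := hrange u1 v1 w1 e1.symm hr1 hd1
    have hrange2 := hrange u2 v2 w2 e2.symm hr2 hd2
    have hB1 := hB u1 v1 w1 e1.symm hr1 hd1
    have hB2 := hB u2 v2 w2 e2.symm hr2 hd2
    simp only at heq
    by_cases hk1 : G.dist u1 w1 = k <;> by_cases hk2 : G.dist u2 w2 = k
    · rw [if_pos hk1, if_pos hk2, Prod.mk.injEq] at heq
      obtain ⟨hu, hw⟩ := heq
      subst hu; subst hw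
      have := hA u1 w1 v1 v2 e1.symm e2.symm hr1 hr2 hd1 hd2 hk1
      subst this
      rfl
    · rw [if_pos hk1, if_neg hk2, Prod.mk.injEq] at heq
      obtain ⟨hu, hw⟩ := heq
      -- u1 = w2, w1 = v2; dist u1 w1 = k but dist w2 v2 = k - 1
      subst hu; subst hw
      rw [SimpleGraph.dist_comm] at hk1
      omega
    · rw [if_neg hk1, if_pos hk2, Prod.mk.injEq] at heq
      obtain ⟨hu, hw⟩ := heq
      subst hu; subst hw
      rw [SimpleGraph.dist_comm] at hk2
      omega
    · rw [if_neg hk1, if_neg hk2, Prod.mk.injEq] at heq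
      obtain ⟨hw, hv⟩ := heq
      subst hw; subst hv
      have hd1' : G.dist u1 w1 = k - 2 := by omega
      have hd2' : G.dist u2 w1 = k - 2 := by omega
      have := hC v1 w1 u1 u2 e1.symm e2.symm hr1 hd1 hd1' hd2'
      subst this
      rfl
  have hle := Finset.card_le_card_of_injOn
    (f := fun t : Σ _ : V, V × V =>
      if G.dist t.2.1 t.2.2 = k then (t.2.1, t.2.2) else (t.2.2, t.1))
    (fun _ _ => Finset.mem_univ _) hinj
  refine le_trans hle ?_
  rw [Finset.card_univ, Fintype.card_prod, sq]
end

section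
/- Let k ≥ 2, p = k/(k-1), and let G be a simple graph on n vertices with girth at least 2k+1. Let V_med = {v : n^((k-2)/(k-1))·d_1(v)^(1/(k-1)) ≤ d_{k-1}(v)}. Then (Σ_{v ∈ V_med} d_1(v)^p)^(1/p) ≤ n. -/
open SimpleGraph Finset

section helpers
set_option linter.unusedSectionVars false
set_option linter.unusedVariables false
variable {V : Type*} [DecidableEq V] {G : SimpleGraph V}


/-- A path containing the edge between its endpoints has length 1. -/
lemma edge_endpoints_length {a u : V} (r : G.Walk a u) (hr : r.IsPath)
    (he : s(u, a) ∈ r.edges) : r.length = 1 := by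
  cases r with
  | nil => simp at he
  | cons h r' =>
    rename_i z
    rw [Walk.edges_cons, List.mem_cons] at he
    rcases he with he | he
    · rw [Sym2.eq_iff] at he
      rcases he with ⟨h1, h2⟩ | ⟨h1, h2⟩
      · subst h1; subst h2; exact absurd rfl h.ne
      · subst h1
        have : r' = Walk.nil := Walk.isPath_iff_eq_nil.mp hr.of_cons
        simp [this]
    · exact absurd ((Walk.cons_isPath_iff h r').mp hr).2
        (fun hn => hn (Walk.snd_mem_support_of_mem_edges r' he))

/-- Two distinct paths between the same pair of vertices give a cycle whose length
is at most the sum of their lengths. -/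
lemma twoPathsCycle {u c : V} (p : G.Walk u c) : ∀ (q : G.Walk u c), p.IsPath → q.IsPath →
    p ≠ q → ∃ (x : V) (w : G.Walk x x), w.IsCycle ∧ w.length ≤ p.length + q.length := by
  induction p with
  | nil =>
    intro q hp hq hne
    exact absurd (Walk.isPath_iff_eq_nil.mp hq).symm hne
  | @cons u a c h p' ih =>
    intro q hp hq hne
    cases q with
    | nil => exact absurd (Walk.isPath_iff_eq_nil.mp hp) (by simp)
    | @cons _ b _ h' q' =>
      by_cases hab : a = b
      · subst hab
        have hne' : p' ≠ q' := fun e => hne (by rw [e])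
        obtain ⟨x, w, hw, hlen⟩ := ih q' hp.of_cons hq.of_cons hne'
        exact ⟨x, w, hw, by simp only [Walk.length_cons]; omega⟩
      · -- different second vertices
        set W : G.Walk a u := p'.append (Walk.cons h' q').reverse with hW
        set r : G.Walk a u := W.bypass with hrdef
        have hrpath : r.IsPath := W.bypass_isPath
        have hrlen : r.length ≤ p'.length + (Walk.cons h' q').length := by
          refine le_trans W.length_bypass_le ?_
          rw [hW, Walk.length_append, Walk.length_reverse]
        have hau : a ≠ u := h.ne'
        have hrpos : 1 ≤ r.length := by
          rcases Nat.eq_zero_or_pos r.length with h0 | h1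
          · exact absurd (Walk.eq_of_length_eq_zero h0) hau
          · exact h1
        have hup' : u ∉ p'.support := ((Walk.cons_isPath_iff h p').mp hp).2
        have huq' : u ∉ q'.support := ((Walk.cons_isPath_iff h' q').mp hq).2
        have hedge : s(u, a) ∉ r.edges := by
          intro he
          have he' : s(u, a) ∈ W.edges := W.edges_bypass_subset he
          rw [hW, Walk.edges_append, Walk.edges_reverse, List.mem_append, List.mem_reverse] at he'
          rcases he' with he' | he'
          · exact hup' (Walk.fst_mem_support_of_mem_edges p' he')
          · rw [Walk.edges_cons, List.mem_cons] at he'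
            rcases he' with he' | he'
            · rw [Sym2.eq_iff] at he'
              rcases he' with ⟨h1, h2⟩ | ⟨h1, h2⟩
              · exact hab h2
              · exact hau h2
            · exact huq' (Walk.fst_mem_support_of_mem_edges q' he')
        refine ⟨u, Walk.cons h r, ?_, ?_⟩
        · exact (Walk.cons_isCycle_iff r h).mpr ⟨hrpath, hedge⟩
        · simp only [Walk.length_cons] at *
          omega

lemma dist_add_dist_le_of_mem_support {a b z : V} (p : G.Walk a b) (hz : z ∈ p.support) :
    G.dist a z + G.dist z b ≤ p.length ∧ G.Reachable z b := by
  have h1 := SimpleGraph.dist_le (p.takeUntil z hz)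
  have h2 := SimpleGraph.dist_le (p.dropUntil z hz)
  have h3 := congrArg Walk.length (p.take_spec hz)
  rw [Walk.length_append] at h3
  exact ⟨by omega, ⟨p.dropUntil z hz⟩⟩

lemma not_mem_support_of_dist {u x z : V} (p : G.Walk u x) (hlen : p.length = G.dist u x)
    (hz : G.dist u x ≤ G.dist u z) (hne : z ≠ x) : z ∉ p.support := by
  intro hmem
  obtain ⟨hle, hreach⟩ := dist_add_dist_le_of_mem_support p hmem
  rw [hlen] at hle
  have h0 : G.dist z x = 0 := by omega
  exact hne (hreach.dist_eq_zero_iff.mp h0)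

/-- In a graph where all cycles are long, a vertex `z` at distance at least that of `x₁, x₂`
from `u` has at most one neighbor among vertices at given distances. -/
lemma uniq_nbr {N : ℕ} (Hcyc : ∀ (x : V) (w : G.Walk x x), w.IsCycle → N ≤ w.length)
    {u z x₁ x₂ : V} (h₁ : G.Adj x₁ z) (h₂ : G.Adj x₂ z)
    (hr₁ : G.Reachable u x₁) (hr₂ : G.Reachable u x₂)
    (hd : G.dist u x₁ + G.dist u x₂ + 3 ≤ N)
    (hz₁ : G.dist u x₁ ≤ G.dist u z) (hz₂ : G.dist u x₂ ≤ G.dist u z) : x₁ = x₂ := by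
  by_contra hne
  obtain ⟨p₁, hp₁, hl₁⟩ := hr₁.exists_path_of_dist
  obtain ⟨p₂, hp₂, hl₂⟩ := hr₂.exists_path_of_dist
  have hz₁' : z ∉ p₁.support := not_mem_support_of_dist p₁ hl₁ hz₁ h₁.ne'
  have hz₂' : z ∉ p₂.support := not_mem_support_of_dist p₂ hl₂ hz₂ h₂.ne'
  set q₁ : G.Walk z u := Walk.cons h₁.symm p₁.reverse with hq₁
  set q₂ : G.Walk z u := Walk.cons h₂.symm p₂.reverse with hq₂
  have hq₁p : q₁.IsPath := by
    rw [hq₁, Walk.cons_isPath_iff]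
    exact ⟨hp₁.reverse, by rw [Walk.support_reverse, List.mem_reverse]; exact hz₁'⟩
  have hq₂p : q₂.IsPath := by
    rw [hq₂, Walk.cons_isPath_iff]
    exact ⟨hp₂.reverse, by rw [Walk.support_reverse, List.mem_reverse]; exact hz₂'⟩
  have hqne : q₁ ≠ q₂ := by
    intro he
    have := congrArg Walk.support he
    rw [hq₁, hq₂, Walk.support_cons, Walk.support_cons,
      p₁.reverse.support_eq_cons, p₂.reverse.support_eq_cons] at this
    obtain ⟨-, this⟩ := List.cons.inj this
    exact hne (List.cons.inj this).1
  obtain ⟨x, w, hw, hlen⟩ := twoPathsCycle q₁ q₂ hq₁p hq₂p hqne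
  have := Hcyc x w hw
  rw [hq₁, hq₂] at hlen
  simp only [Walk.length_cons, Walk.length_reverse] at hlen
  omega

/-- No two vertices at equal distance `m ≥ 1` from `u` are adjacent, if all cycles
have length at least `2m+2`. -/
lemma no_sphere_edge {N m : ℕ} (Hcyc : ∀ (x : V) (w : G.Walk x x), w.IsCycle → N ≤ w.length)
    {u v₁ v₂ : V} (hr₁ : G.Reachable u v₁) (hr₂ : G.Reachable u v₂)
    (hd₁ : G.dist u v₁ = m) (hd₂ : G.dist u v₂ = m) (hadj : G.Adj v₁ v₂)
    (hN : 2 * m + 2 ≤ N) : False := by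
  obtain ⟨p₁, hp₁, hl₁⟩ := hr₁.exists_path_of_dist
  obtain ⟨p₂, hp₂, hl₂⟩ := hr₂.exists_path_of_dist
  have hv₂ : v₂ ∉ p₁.support := by
    refine not_mem_support_of_dist p₁ hl₁ (by rw [hd₁, hd₂]) hadj.ne'
  set q : G.Walk v₂ u := Walk.cons hadj.symm p₁.reverse with hq
  have hqp : q.IsPath := by
    rw [hq, Walk.cons_isPath_iff]
    exact ⟨hp₁.reverse, by rw [Walk.support_reverse, List.mem_reverse]; exact hv₂⟩
  have hne : p₂.reverse ≠ q := by
    intro he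
    have := congrArg Walk.length he
    rw [hq, Walk.length_cons, Walk.length_reverse, Walk.length_reverse, hl₁, hl₂] at this
    omega
  obtain ⟨x, w, hw, hlen⟩ := twoPathsCycle p₂.reverse q hp₂.reverse hqp hne
  have := Hcyc x w hw
  rw [hq] at hlen
  simp only [Walk.length_cons, Walk.length_reverse, hl₁, hl₂, hd₁, hd₂] at hlen
  omega

lemma sphere_deg_sum [Fintype V] [DecidableRel G.Adj] {N m : ℕ}
    (Hcyc : ∀ (x : V) (w : G.Walk x x), w.IsCycle → N ≤ w.length)
    (hm : 1 ≤ m) (hN : 2 * m + 3 ≤ N) (u : V) :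
    ∑ v ∈ univ.filter (fun v => G.Reachable u v ∧ G.dist u v = m), G.degree v
      ≤ Fintype.card V := by
  classical
  set S := univ.filter (fun v => G.Reachable u v ∧ G.dist u v = m) with hS
  set T := univ.filter (fun x => G.Reachable u x ∧ m + 1 ≤ G.dist u x) with hT
  set A : V → Finset V := fun v => (G.neighborFinset v).filter (fun x => ¬ m ≤ G.dist u x)
    with hA
  set B : V → Finset V := fun v => (G.neighborFinset v).filter (fun x => m ≤ G.dist u x)
    with hB
  have hmemS : ∀ v ∈ S, G.Reachable u v ∧ G.dist u v = m := by
    intro v hv; rw [hS, Finset.mem_filter] at hv; exact hv.2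
  have fact_nbr : ∀ v ∈ S, ∀ x, G.Adj v x → G.Reachable u x ∧ m ≤ G.dist u x + 1 := by
    intro v hv x hx
    obtain ⟨hru, hdu⟩ := hmemS v hv
    have hrx : G.Reachable u x := hru.trans hx.reachable
    refine ⟨hrx, ?_⟩
    obtain ⟨sp, hsp, hl⟩ := hrx.exists_path_of_dist
    have := SimpleGraph.dist_le (sp.concat hx.symm)
    rw [Walk.length_concat, hl] at this
    omega
  have hdeg : ∀ v, G.degree v = (A v).card + (B v).card := by
    intro v
    rw [hA, hB, ← G.card_neighborFinset_eq_degree v]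
    have := Finset.card_filter_add_card_filter_not
      (s := G.neighborFinset v) (fun x => m ≤ G.dist u x)
    simp only [] 
    omega
  have boundA : ∀ v ∈ S, (A v).card ≤ 1 := by
    intro v hv
    refine Finset.card_le_one.mpr ?_
    intro x₁ hx₁ x₂ hx₂
    rw [hA, Finset.mem_filter, mem_neighborFinset] at hx₁ hx₂
    obtain ⟨hr₁, hd₁⟩ := fact_nbr v hv x₁ hx₁.1
    obtain ⟨hr₂, hd₂⟩ := fact_nbr v hv x₂ hx₂.1
    obtain ⟨hru, hdu⟩ := hmemS v hv
    exact uniq_nbr Hcyc hx₁.1.symm hx₂.1.symm hr₁ hr₂ (by omega) (by omega) (by omega)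
  have boundBsub : ∀ v ∈ S, B v ⊆ T := by
    intro v hv x hx
    rw [hB, Finset.mem_filter, mem_neighborFinset] at hx
    obtain ⟨hrx, hdx⟩ := fact_nbr v hv x hx.1
    obtain ⟨hru, hdu⟩ := hmemS v hv
    rw [hT, Finset.mem_filter]
    refine ⟨Finset.mem_univ _, hrx, ?_⟩
    rcases Nat.lt_or_ge (G.dist u x) (m + 1) with hlt | hge
    · have : G.dist u x = m := by omega
      exact absurd (no_sphere_edge Hcyc hru hrx hdu this hx.1 (by omega)) id
    · exact hge
  have hdisjB : ∀ v₁ ∈ S, ∀ v₂ ∈ S, v₁ ≠ v₂ → Disjoint (B v₁) (B v₂) := by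
    intro v₁ hv₁ v₂ hv₂ hne
    rw [Finset.disjoint_left]
    intro x hx₁ hx₂
    rw [hB, Finset.mem_filter, mem_neighborFinset] at hx₁ hx₂
    obtain ⟨hr₁, hd₁⟩ := hmemS v₁ hv₁
    obtain ⟨hr₂, hd₂⟩ := hmemS v₂ hv₂
    exact hne (uniq_nbr Hcyc hx₁.1 hx₂.1 hr₁ hr₂ (by omega) (by omega) (by omega))
  have hST : Disjoint S T := by
    rw [Finset.disjoint_left]
    intro a ha hb
    rw [hS, Finset.mem_filter] at ha
    rw [hT, Finset.mem_filter] at hb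
    omega
  calc ∑ v ∈ S, G.degree v = ∑ v ∈ S, ((A v).card + (B v).card) := by
        exact Finset.sum_congr rfl fun v _ => hdeg v
    _ = (∑ v ∈ S, (A v).card) + ∑ v ∈ S, (B v).card := Finset.sum_add_distrib
    _ ≤ (∑ v ∈ S, 1) + (S.biUnion B).card := by
        refine Nat.add_le_add (Finset.sum_le_sum boundA) ?_
        rw [Finset.card_biUnion hdisjB]
    _ ≤ S.card + T.card := by
        rw [Finset.sum_const, smul_eq_mul, mul_one]
        refine Nat.add_le_add_left (Finset.card_le_card ?_) _
        exact Finset.biUnion_subset.mpr boundBsub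
    _ = (S ∪ T).card := (Finset.card_union_of_disjoint hST).symm
    _ ≤ Fintype.card V := Finset.card_le_univ _


lemma deg_mul_distCount_sum [Fintype V] [DecidableRel G.Adj] {N m : ℕ}
    (Hcyc : ∀ (x : V) (w : G.Walk x x), w.IsCycle → N ≤ w.length)
    (hm : 1 ≤ m) (hN : 2 * m + 3 ≤ N) :
    ∑ v : V, G.degree v * distCount G v m ≤ Fintype.card V * Fintype.card V := by
  classical
  have hdc : ∀ v : V, distCount G v m
      = (univ.filter (fun w => G.Reachable v w ∧ G.dist v w = m)).card := by
    intro v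
    rw [distCount, Set.ncard_eq_toFinset_card']
    simp [Set.toFinset_setOf]
  calc ∑ v : V, G.degree v * distCount G v m
      = ∑ v : V, ∑ w ∈ univ.filter (fun w => G.Reachable v w ∧ G.dist v w = m),
          G.degree v := by
        refine Finset.sum_congr rfl fun v _ => ?_
        rw [hdc, Finset.sum_const, smul_eq_mul, mul_comm]
    _ = ∑ w : V, ∑ v ∈ univ.filter (fun v => G.Reachable w v ∧ G.dist w v = m),
          G.degree v := by
        simp only [Finset.sum_filter]
        rw [Finset.sum_comm]
        refine Finset.sum_congr rfl fun w _ => Finset.sum_congr rfl fun v _ => ?_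
        have hiff : (G.Reachable v w ∧ G.dist v w = m) ↔
            (G.Reachable w v ∧ G.dist w v = m) := by
          rw [reachable_comm, SimpleGraph.dist_comm]
        exact if_congr hiff rfl rfl
    _ ≤ ∑ _w : V, Fintype.card V :=
        Finset.sum_le_sum fun w _ => sphere_deg_sum Hcyc hm hN w
    _ = Fintype.card V * Fintype.card V := by
        rw [Finset.sum_const, smul_eq_mul, Finset.card_univ]

end helpers

theorem stmt11 {V : Type*} [Fintype V] [DecidableEq V] (G : SimpleGraph V)
    [DecidableRel G.Adj] (k : ℕ) (hk : 2 ≤ k) (p : ℝ)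
    (hp : p = (k : ℝ) / ((k : ℝ) - 1)) (hg : (2 * k + 1 : ℕ∞) ≤ G.girth) :
    (∑ v ∈ Finset.univ.filter
        (fun v => (Fintype.card V : ℝ) ^ (((k : ℝ) - 2) / ((k : ℝ) - 1)) *
            (G.degree v : ℝ) ^ ((1 : ℝ) / ((k : ℝ) - 1)) ≤ (distCount G v (k - 1) : ℝ)),
        (G.degree v : ℝ) ^ p) ^ (1 / p) ≤ (Fintype.card V : ℝ) := by
  classical
  have hk2 : (2:ℝ) ≤ (k:ℝ) := by exact_mod_cast hk
  have hkm1pos : (0:ℝ) < (k:ℝ) - 1 := by linarith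
  have hppos : 0 < p := by rw [hp]; exact div_pos (by linarith) hkm1pos
  set n := Fintype.card V with hn
  set m := k - 1 with hm
  have hm1 : 1 ≤ m := by omega
  -- all cycles have length ≥ 2m+3
  have Hcyc : ∀ (x : V) (w : G.Walk x x), w.IsCycle → 2 * m + 3 ≤ w.length := by
    have hg' : 2 * k + 1 ≤ G.girth := by exact_mod_cast hg
    intro x w hw
    have h1 : G.egirth ≤ (w.length : ℕ∞) := by
      refine le_trans (iInf_le _ x) ?_
      refine le_trans (iInf_le _ w) (iInf_le _ hw)
    have h2 : G.girth ≤ w.length := by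
      have := ENat.toNat_le_toNat h1 (by simp)
      simpa [SimpleGraph.girth] using this
    omega
  rcases Nat.eq_zero_or_pos n with h0 | hnpos
  · have hV : IsEmpty V := Fintype.card_eq_zero_iff.mp h0
    rw [Finset.univ_eq_empty, Finset.filter_empty, Finset.sum_empty,
      Real.zero_rpow (one_div_ne_zero hppos.ne')]
    positivity
  have hnR : (0:ℝ) < (n:ℝ) := by exact_mod_cast hnpos
  set e₁ : ℝ := ((k:ℝ) - 2) / ((k:ℝ) - 1) with he₁
  set c : ℝ := (n:ℝ) ^ e₁ with hc
  have hcpos : 0 < c := Real.rpow_pos_of_pos hnR _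
  set T := Finset.univ.filter
      (fun v => (n : ℝ) ^ e₁ * (G.degree v : ℝ) ^ ((1 : ℝ) / ((k : ℝ) - 1))
        ≤ (distCount G v m : ℝ)) with hT
  have hsum : ∑ v ∈ T, (G.degree v : ℝ) ^ p ≤ (n:ℝ) ^ p := by
    have step1 : ∀ v ∈ T, (G.degree v : ℝ) ^ p
        ≤ (G.degree v : ℝ) * (distCount G v m : ℝ) / c := by
      intro v hv
      rw [hT, Finset.mem_filter] at hv
      rcases Nat.eq_zero_or_pos (G.degree v) with hd0 | hdpos
      · rw [hd0]
        simp [Real.zero_rpow hppos.ne']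
      have hdR : (0:ℝ) < (G.degree v : ℝ) := by exact_mod_cast hdpos
      have hsplit : (G.degree v : ℝ) ^ p
          = (G.degree v : ℝ) * (G.degree v : ℝ) ^ ((1:ℝ)/((k:ℝ)-1)) := by
        have hpe : p = 1 + 1/((k:ℝ)-1) := by rw [hp]; field_simp; ring
        rw [hpe, Real.rpow_add hdR, Real.rpow_one]
      rw [hsplit, mul_div_assoc]
      refine mul_le_mul_of_nonneg_left ?_ hdR.le
      rw [le_div_iff₀ hcpos, mul_comm]
      exact hv.2
    calc ∑ v ∈ T, (G.degree v : ℝ) ^ p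
        ≤ ∑ v ∈ T, (G.degree v : ℝ) * (distCount G v m : ℝ) / c :=
          Finset.sum_le_sum step1
      _ = (∑ v ∈ T, (G.degree v : ℝ) * (distCount G v m : ℝ)) / c :=
          (Finset.sum_div _ _ _).symm
      _ ≤ (∑ v : V, (G.degree v : ℝ) * (distCount G v m : ℝ)) / c := by
          refine (div_le_div_iff_of_pos_right hcpos).mpr ?_
          refine Finset.sum_le_sum_of_subset_of_nonneg (Finset.subset_univ _) ?_
          intro i _ _
          positivity
      _ ≤ ((n:ℝ) * (n:ℝ)) / c := by
          refine (div_le_div_iff_of_pos_right hcpos).mpr ?_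
          have hD := deg_mul_distCount_sum (G := G) Hcyc hm1 le_rfl
          calc ∑ v : V, (G.degree v : ℝ) * (distCount G v m : ℝ)
              = ((∑ v : V, G.degree v * distCount G v m : ℕ) : ℝ) := by push_cast; rfl
            _ ≤ ((n * n : ℕ) : ℝ) := by exact_mod_cast hD
            _ = (n:ℝ) * (n:ℝ) := by push_cast; rfl
      _ = (n:ℝ) ^ p := by
          have h2e : (n:ℝ) * (n:ℝ) = (n:ℝ) ^ (2:ℝ) := by
            rw [show ((2:ℝ)) = ((2:ℕ):ℝ) by norm_num, Real.rpow_natCast]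
            ring
          rw [h2e, hc, ← Real.rpow_sub hnR]
          congr 1
          rw [hp, he₁]
          field_simp
          ring
  have hLHS : (∑ v ∈ T, (G.degree v : ℝ) ^ p) ^ (1/p) ≤ ((n:ℝ) ^ p) ^ (1/p) := by
    refine Real.rpow_le_rpow ?_ hsum (by positivity)
    refine Finset.sum_nonneg fun v _ => Real.rpow_nonneg (by positivity) _
  calc (∑ v ∈ T, (G.degree v : ℝ) ^ p) ^ (1/p) ≤ ((n:ℝ) ^ p) ^ (1/p) := hLHS
    _ = (n:ℝ) := by
        rw [← Real.rpow_mul hnR.le, mul_one_div_cancel hppos.ne', Real.rpow_one]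
end
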